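/- arXiv:2311.09052 — 6 statements merged into one kernel-verified Lean document; each statement's English description precedes it below -/
import Mathlib

section
/- Let X and Y be independent nonnegative random variables on a probability space with Y > 0 almost surely. Then E[ln(1 + X/Y)] = ∫₀^∞ (1/z) · (1 − E[e^{−zX}]) · E[e^{−zY}] dz, where both sides are interpreted as values in [0, ∞] (the integrand on the right is nonnegative for every z > 0). -/
open MeasureTheory ProbabilityTheory Set

lemma aux_lint_exp {t : ℝ} (ht : 0 < t) :
    ∫⁻ z in Ioi (0:ℝ), ENNReal.ofReal (Real.exp (-(t * z))) = ENNReal.ofReal (1 / t) := by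
  have hint : IntegrableOn (fun z => Real.exp (-t * z)) (Ioi (0:ℝ)) :=
    exp_neg_integrableOn_Ioi 0 ht
  rw [← ofReal_integral_eq_lintegral_ofReal]
  · congr 1
    have h := integral_comp_mul_left_Ioi (fun x => Real.exp (-x)) 0 ht
    simp only [mul_zero, smul_eq_mul, integral_exp_neg_Ioi_zero] at h
    simpa [one_div] using h
  · exact (by simpa [neg_mul] using hint : IntegrableOn (fun z => Real.exp (-(t * z))) (Ioi (0:ℝ)))
  · exact Filter.Eventually.of_forall fun z => (Real.exp_pos _).le

lemma aux_frullani {a b : ℝ} (ha : 0 < a) (hab : a ≤ b) :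
    ∫⁻ z in Ioi (0:ℝ), ENNReal.ofReal ((1 / z) * (Real.exp (-z * a) - Real.exp (-z * b)))
      = ENNReal.ofReal (Real.log (b / a)) := by
  have hb : 0 < b := ha.trans_le hab
  -- pointwise: for z > 0, the integrand equals ∫⁻ t in Ioc a b, ofReal (exp (-z*t))
  have key : ∀ z : ℝ, 0 < z →
      ENNReal.ofReal ((1 / z) * (Real.exp (-z * a) - Real.exp (-z * b)))
        = ∫⁻ t in Ioc a b, ENNReal.ofReal (Real.exp (-z * t)) := by
    intro z hz
    have hderiv : ∀ t ∈ Set.uIcc a b,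
        HasDerivAt (fun t => -(1 / z) * Real.exp (-z * t)) (Real.exp (-z * t)) t := by
      intro t _
      have h1 : HasDerivAt (fun t : ℝ => -z * t) (-z) t := by
        simpa using (hasDerivAt_id t).const_mul (-z)
      have h2 := (h1.exp).const_mul (-(1 / z))
      refine h2.congr_deriv ?_
      rw [show -(1 / z) * (Real.exp (-z * t) * -z) = Real.exp (-z * t) * (z * z⁻¹) by ring,
        mul_inv_cancel₀ hz.ne', mul_one]
    have hcont : IntervalIntegrable (fun t => Real.exp (-z * t)) volume a b :=
      (Continuous.intervalIntegrable (by continuity) a b)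
    have hI := intervalIntegral.integral_eq_sub_of_hasDerivAt hderiv hcont
    have hI' : ∫ t in a..b, Real.exp (-z * t)
        = (1 / z) * (Real.exp (-z * a) - Real.exp (-z * b)) := by
      rw [hI]; ring
    rw [← hI', intervalIntegral.integral_of_le hab,
      ofReal_integral_eq_lintegral_ofReal]
    · exact (Continuous.integrableOn_Ioc (by continuity))
    · exact Filter.Eventually.of_forall fun t => (Real.exp_pos _).le
  rw [setLIntegral_congr_fun measurableSet_Ioi
    (fun z (hz : z ∈ Ioi (0:ℝ)) => key z hz)]
  rw [lintegral_lintegral_swap]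
  · have inner : ∀ t : ℝ, t ∈ Ioc a b →
        ∫⁻ z in Ioi (0:ℝ), ENNReal.ofReal (Real.exp (-z * t)) = ENNReal.ofReal (1 / t) := by
      intro t ht
      have htpos : 0 < t := ha.trans_le ht.1.le
      rw [← aux_lint_exp htpos]
      refine setLIntegral_congr_fun measurableSet_Ioi
        (fun z _ => ?_)
      ring_nf
    rw [setLIntegral_congr_fun measurableSet_Ioc
      inner]
    rw [← ofReal_integral_eq_lintegral_ofReal]
    · congr 1
      rw [← intervalIntegral.integral_of_le hab]
      exact integral_one_div_of_pos ha hb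
    · have hii : IntervalIntegrable (fun t : ℝ => 1 / t) volume a b := by
        apply intervalIntegral.intervalIntegrable_one_div
        · intro x hx
          have h1 : a ⊓ b ≤ x := hx.1
          exact ((lt_inf_iff.mpr ⟨ha, hb⟩).trans_le h1).ne'
        · exact continuousOn_id
      exact (intervalIntegrable_iff_integrableOn_Ioc_of_le hab).mp hii
    · refine (ae_restrict_iff' measurableSet_Ioc).mpr
        (Filter.Eventually.of_forall fun t ht => ?_)
      have := ha.trans ht.1
      positivity
  · exact (((measurable_fst.neg.mul measurable_snd).exp).ennreal_ofReal).aemeasurable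

/-- For independent nonnegative random variables `X` and `Y` with `Y > 0`
almost surely, `E[ln(1 + X/Y)] = ∫₀^∞ (1/z)(1 − E[e^{−zX}])E[e^{−zY}] dz`, both sides
interpreted as values in `[0, ∞]`. -/
theorem expected_log_one_add_ratio
    {Ω : Type*} [MeasurableSpace Ω] (μ : Measure Ω) [IsProbabilityMeasure μ]
    (X Y : Ω → ℝ) (hXm : Measurable X) (hYm : Measurable Y)
    (hindep : IndepFun X Y μ)
    (hX : ∀ᵐ ω ∂μ, 0 ≤ X ω) (hY : ∀ᵐ ω ∂μ, 0 < Y ω) :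
    ∫⁻ ω, ENNReal.ofReal (Real.log (1 + X ω / Y ω)) ∂μ
      = ∫⁻ z in Set.Ioi (0 : ℝ),
          ENNReal.ofReal
            ((1 / z) * (1 - ∫ ω, Real.exp (-z * X ω) ∂μ) * (∫ ω, Real.exp (-z * Y ω) ∂μ)) := by
  -- step 1: pointwise Frullani representation
  have step1 : ∫⁻ ω, ENNReal.ofReal (Real.log (1 + X ω / Y ω)) ∂μ
      = ∫⁻ ω, (∫⁻ z in Ioi (0:ℝ),
          ENNReal.ofReal ((1 / z) * (Real.exp (-z * Y ω) - Real.exp (-z * (X ω + Y ω))))) ∂μ := by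
    refine lintegral_congr_ae ?_
    filter_upwards [hX, hY] with ω hx hy
    rw [aux_frullani hy (le_add_of_nonneg_left hx)]
    congr 1
    rw [add_div, div_self hy.ne', add_comm]
  rw [step1]
  -- step 2: swap the order of integration (Tonelli)
  rw [lintegral_lintegral_swap]
  · -- step 3: evaluate the inner integral for each fixed z > 0
    refine setLIntegral_congr_fun measurableSet_Ioi
      (fun z (hz : z ∈ Ioi (0:ℝ)) => ?_)
    have hz' : (0:ℝ) < z := hz
    -- rewrite the integrand as a product of independent factors
    have hptw : ∀ ω, ENNReal.ofReal
          ((1 / z) * (Real.exp (-z * Y ω) - Real.exp (-z * (X ω + Y ω))))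
        = ENNReal.ofReal
          (((1 / z) * (1 - Real.exp (-z * X ω))) * Real.exp (-z * Y ω)) := by
      intro ω
      congr 1
      have : Real.exp (-z * (X ω + Y ω)) = Real.exp (-z * X ω) * Real.exp (-z * Y ω) := by
        rw [← Real.exp_add]; ring_nf
      rw [this]; ring
    simp only [hptw]
    -- integrability facts
    have hXe : Integrable (fun ω => Real.exp (-z * X ω)) μ := by
      refine Integrable.mono' (integrable_const 1)
        ((hXm.const_mul (-z)).exp.aestronglyMeasurable) ?_
      filter_upwards [hX] with ω hx
      rw [Real.norm_eq_abs, abs_of_pos (Real.exp_pos _)]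
      exact Real.exp_le_one_iff.mpr (by nlinarith)
    have hYe : Integrable (fun ω => Real.exp (-z * Y ω)) μ := by
      refine Integrable.mono' (integrable_const 1)
        ((hYm.const_mul (-z)).exp.aestronglyMeasurable) ?_
      filter_upwards [hY] with ω hy
      rw [Real.norm_eq_abs, abs_of_pos (Real.exp_pos _)]
      exact Real.exp_le_one_iff.mpr (by nlinarith)
    have hf1 : Integrable (fun ω => (1 / z) * (1 - Real.exp (-z * X ω))) μ :=
      ((integrable_const 1).sub hXe).const_mul _
    have hmul : Integrable
        (fun ω => ((1 / z) * (1 - Real.exp (-z * X ω))) * Real.exp (-z * Y ω)) μ := by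
      refine Integrable.mono' (integrable_const (1 / z))
        ((((hXm.const_mul (-z)).exp.const_sub 1).const_mul _).mul
          (hYm.const_mul (-z)).exp).aestronglyMeasurable ?_
      filter_upwards [hX, hY] with ω hx hy
      have e1 : Real.exp (-z * X ω) ≤ 1 := Real.exp_le_one_iff.mpr (by nlinarith)
      have e1' : 0 < Real.exp (-z * X ω) := Real.exp_pos _
      have e2 : Real.exp (-z * Y ω) ≤ 1 := Real.exp_le_one_iff.mpr (by nlinarith)
      have e2' : 0 < Real.exp (-z * Y ω) := Real.exp_pos _
      rw [Real.norm_eq_abs, abs_mul, abs_mul, abs_of_pos e2',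
        abs_of_pos (one_div_pos.mpr hz'), abs_of_nonneg (by linarith : (0:ℝ) ≤ 1 - Real.exp (-z * X ω))]
      calc 1 / z * (1 - Real.exp (-z * X ω)) * Real.exp (-z * Y ω)
          ≤ 1 / z * 1 * 1 := by
            apply mul_le_mul _ e2 e2'.le (by positivity)
            apply mul_le_mul_of_nonneg_left (by linarith) (by positivity)
        _ = 1 / z := by ring
    -- pass from lintegral to Bochner integral
    rw [← ofReal_integral_eq_lintegral_ofReal hmul]
    · -- independence
      have hind2 : IndepFun (fun ω => (1 / z) * (1 - Real.exp (-z * X ω)))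
          (fun ω => Real.exp (-z * Y ω)) μ := by
        exact hindep.comp
          (measurable_const.mul ((measurable_const.mul measurable_id).exp.const_sub 1))
          ((measurable_const.mul measurable_id).exp)
      have := hind2.integral_fun_mul_eq_mul_integral
        (((hXm.const_mul (-z)).exp.const_sub 1).const_mul _).aestronglyMeasurable
        ((hYm.const_mul (-z)).exp.aestronglyMeasurable)
      rw [this]
      congr 1
      rw [integral_const_mul, integral_sub (integrable_const 1) hXe, integral_const,
        probReal_univ]
      simp
    · filter_upwards [hX, hY] with ω hx hy
      have e1 : Real.exp (-z * X ω) ≤ 1 := Real.exp_le_one_iff.mpr (by nlinarith)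
      have e2' : 0 < Real.exp (-z * Y ω) := Real.exp_pos _
      have h0 : (0:ℝ) ≤ 1 / z := by positivity
      exact mul_nonneg (mul_nonneg h0 (by linarith)) e2'.le
  · -- measurability for Tonelli
    apply Measurable.aemeasurable
    apply Measurable.ennreal_ofReal
    apply Measurable.mul
    · exact measurable_const.div measurable_snd
    · exact ((measurable_snd.neg.mul (hYm.comp measurable_fst)).exp).sub
        ((measurable_snd.neg.mul
          ((hXm.comp measurable_fst).add (hYm.comp measurable_fst))).exp)
end

section
/- Let m and K be positive integers, c > 0 a real constant, I a nonempty finite index set, and ℓ_i > 0 real numbers for i ∈ I. Let X and (g_i)_{i∈I} be mutually independent random variables, where X has the Gamma distribution with shape m and rate 1, and each g_i has the Gamma distribution with shape K and rate 1. Then E[ln(1 + cX / Σ_{i∈I} ℓ_i g_i)] = ∫₀^∞ (1/z) · (1 − (1 + cz)^{−m}) · Π_{i∈I} (1 + ℓ_i z)^{−K} dz. -/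
open MeasureTheory ProbabilityTheory

namespace SIRProof

open Real Set

lemma measurable_gammaPDF (a r : ℝ) : Measurable (gammaPDF a r) :=
  (measurable_gammaPDFReal a r).ennreal_ofReal

lemma gammaPDF_mul_exp {a : ℝ} (ha : 0 < a) {s : ℝ} (hs : 0 ≤ s) (x : ℝ) :
    gammaPDF a 1 x * ENNReal.ofReal (Real.exp (-(s * x)))
      = ENNReal.ofReal ((1 + s) ^ (-a)) * gammaPDF a (1 + s) x := by
  have h1s : (0:ℝ) < 1 + s := by linarith
  rcases lt_or_ge x 0 with hx | hx
  · simp [gammaPDF_of_neg hx]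
  · rw [gammaPDF_of_nonneg hx, gammaPDF_of_nonneg hx,
      ← ENNReal.ofReal_mul (by positivity), ← ENNReal.ofReal_mul (by positivity)]
    congr 1
    rw [one_rpow, Real.rpow_neg h1s.le]
    have hG : (0:ℝ) < Real.Gamma a := Real.Gamma_pos_of_pos ha
    have hp : (0:ℝ) < (1+s) ^ a := Real.rpow_pos_of_pos h1s a
    rw [mul_assoc, mul_assoc, ← Real.exp_add]
    field_simp
    ring_nf

lemma gamma_laplace {a : ℝ} (ha : 0 < a) {s : ℝ} (hs : 0 ≤ s) :
    ∫ x, Real.exp (-(s * x)) ∂(gammaMeasure a 1) = (1 + s) ^ (-a) := by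
  have h1s : (0:ℝ) < 1 + s := by linarith
  have hms : Measurable fun x : ℝ => Real.exp (-(s * x)) :=
    (measurable_id.const_mul s).neg.exp
  rw [integral_eq_lintegral_of_nonneg_ae (ae_of_all _ fun x => (Real.exp_pos _).le)
    hms.aestronglyMeasurable]
  rw [gammaMeasure, lintegral_withDensity_eq_lintegral_mul _
    (measurable_gammaPDF a 1) hms.ennreal_ofReal]
  have : ∀ x, (gammaPDF a 1 * fun x => ENNReal.ofReal (Real.exp (-(s * x)))) x
      = ENNReal.ofReal ((1 + s) ^ (-a)) * gammaPDF a (1 + s) x := fun x =>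
    gammaPDF_mul_exp ha hs x
  rw [lintegral_congr this, lintegral_const_mul _ (measurable_gammaPDF a (1+s)),
    lintegral_gammaPDF_eq_one ha h1s, mul_one,
    ENNReal.toReal_ofReal (Real.rpow_nonneg h1s.le _)]

lemma exp_moment {Ω : Type*} [MeasurableSpace Ω] {μ : Measure Ω} {Y : Ω → ℝ}
    (hYm : Measurable Y) {a : ℝ} (ha : 0 < a) (hY : Measure.map Y μ = gammaMeasure a 1)
    {s : ℝ} (hs : 0 ≤ s) :
    ∫ ω, Real.exp (-(s * Y ω)) ∂μ = (1 + s) ^ (-a) := by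
  have h := gamma_laplace ha hs
  rw [← hY] at h
  rw [← h]
  exact (integral_map hYm.aemeasurable
    ((measurable_id.const_mul s).neg.exp).aestronglyMeasurable).symm

lemma gammaMeasure_Iic_zero {a r : ℝ} : gammaMeasure a r (Iic 0) = 0 := by
  rw [gammaMeasure, withDensity_apply _ measurableSet_Iic,
    lintegral_Iic_eq_lintegral_Iio_add_Icc _ le_rfl,
    lintegral_gammaPDF_of_nonpos le_rfl, Icc_self, zero_add]
  exact setLIntegral_measure_zero _ _ (by simp)

lemma ae_pos {Ω : Type*} [MeasurableSpace Ω] {μ : Measure Ω} {Y : Ω → ℝ}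
    (hYm : Measurable Y) {a : ℝ} (hY : Measure.map Y μ = gammaMeasure a 1) :
    ∀ᵐ ω ∂μ, 0 < Y ω := by
  rw [ae_iff]
  have : {ω | ¬ 0 < Y ω} = Y ⁻¹' (Iic 0) := by ext ω; simp [not_lt]
  rw [this, ← Measure.map_apply hYm measurableSet_Iic, hY, gammaMeasure_Iic_zero]

lemma integral_exp_Ioc {z : ℝ} (hz : 0 < z) (y x : ℝ) (hx : 0 ≤ x) :
    ∫ t in Ioc y (y + x), Real.exp (-(z * t))
      = z⁻¹ * (Real.exp (-(z * y)) - Real.exp (-(z * (y + x)))) := by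
  rw [← intervalIntegral.integral_of_le (by linarith)]
  have : ∀ t : ℝ, Real.exp (-(z * t)) = Real.exp ((-z) * t) := by intro t; ring_nf
  simp_rw [this]
  rw [intervalIntegral.integral_comp_mul_left (fun u => Real.exp u) (by linarith : (-z) ≠ 0),
    integral_exp, smul_eq_mul]
  have h1 : -z * (y + x) = -(z * (y+x)) := by ring
  have h2 : -z * y = -(z * y) := by ring
  rw [h1, h2, inv_neg]
  ring

lemma frullani_lintegral {x y : ℝ} (hy : 0 < y) (hx : 0 ≤ x) :
    ∫⁻ z in Ioi (0:ℝ),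
        ENNReal.ofReal (z⁻¹ * (Real.exp (-(z * y)) - Real.exp (-(z * (y + x)))))
      = ENNReal.ofReal (Real.log (1 + x / y)) := by
  have step1 :
      ∫⁻ z in Ioi (0:ℝ),
        ENNReal.ofReal (z⁻¹ * (Real.exp (-(z * y)) - Real.exp (-(z * (y + x)))))
      = ∫⁻ z in Ioi (0:ℝ), ∫⁻ t in Ioc y (y + x), ENNReal.ofReal (Real.exp (-(z * t))) := by
    refine setLIntegral_congr_fun measurableSet_Ioi (fun z hz => ?_)
    rw [← integral_exp_Ioc hz y x hx,
      ofReal_integral_eq_lintegral_ofReal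
        (Continuous.integrableOn_Ioc (by fun_prop : Continuous fun t : ℝ => Real.exp (-(z * t))))
        (ae_of_all _ fun t => (Real.exp_pos _).le)]
  have step2 :
      ∫⁻ z in Ioi (0:ℝ), ∫⁻ t in Ioc y (y + x), ENNReal.ofReal (Real.exp (-(z * t)))
      = ∫⁻ t in Ioc y (y + x), ∫⁻ z in Ioi (0:ℝ), ENNReal.ofReal (Real.exp (-(z * t))) := by
    refine lintegral_lintegral_swap ?_
    exact ((Real.continuous_exp.comp
      (continuous_fst.mul continuous_snd).neg).measurable.ennreal_ofReal).aemeasurable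
  have step3 :
      ∫⁻ t in Ioc y (y + x), ∫⁻ z in Ioi (0:ℝ), ENNReal.ofReal (Real.exp (-(z * t)))
      = ∫⁻ t in Ioc y (y + x), ENNReal.ofReal t⁻¹ := by
    refine setLIntegral_congr_fun measurableSet_Ioc (fun t ht => ?_)
    have htpos : 0 < t := lt_of_lt_of_le hy ht.1.le
    rw [← ofReal_integral_eq_lintegral_ofReal
        ((exp_neg_integrableOn_Ioi 0 (by positivity : (0:ℝ) < t)).congr_fun
          (fun z _ => by ring_nf) measurableSet_Ioi)
        (ae_of_all _ fun z => (Real.exp_pos _).le)]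
    congr 1
    have : ∀ z ∈ Ioi (0:ℝ), Real.exp (-(z * t)) = z ^ ((1:ℝ) - 1) * Real.exp (-(t * z)) := by
      intro z hz
      rw [sub_self, Real.rpow_zero, one_mul, mul_comm]
    rw [setIntegral_congr_fun measurableSet_Ioi this,
      integral_rpow_mul_exp_neg_mul_Ioi one_pos htpos, Real.Gamma_one, mul_one, Real.rpow_one,
      one_div]
  have step4 :
      ∫⁻ t in Ioc y (y + x), ENNReal.ofReal t⁻¹ = ENNReal.ofReal (Real.log (1 + x / y)) := by
    have hcont : ContinuousOn (fun t : ℝ => t⁻¹) (Icc y (y + x)) := by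
      refine ContinuousOn.inv₀ continuousOn_id fun t ht => ?_
      have : 0 < t := lt_of_lt_of_le hy ht.1
      exact this.ne'
    rw [← ofReal_integral_eq_lintegral_ofReal
        ((hcont.integrableOn_Icc).mono_set Ioc_subset_Icc_self)
        ((ae_restrict_iff' measurableSet_Ioc).2 (ae_of_all _ fun t ht =>
          inv_nonneg.2 (lt_of_lt_of_le hy ht.1.le).le))]
    congr 1
    rw [← intervalIntegral.integral_of_le (by linarith : y ≤ y + x),
      integral_inv (by
        rw [uIcc_of_le (by linarith : y ≤ y + x)]
        rintro ⟨h0, -⟩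
        linarith)]
    congr 1
    field_simp
  rw [step1, step2, step3, step4]

end SIRProof

open Set in
open SIRProof in
/-- Conditional ergodic rate formula: if `X ~ Gamma(m, 1)` and the `g i` are
i.i.d.-independent `Gamma(K, 1)` fading gains (all mutually independent), `c > 0` and the
pathloss coefficients `ℓ i > 0`, then
`E[ln(1 + cX / Σᵢ ℓᵢ gᵢ)] = ∫₀^∞ (1/z)(1 − (1+cz)^{−m}) Πᵢ (1 + ℓᵢ z)^{−K} dz`. -/
theorem expected_log_SIR_gamma
    {Ω ι : Type*} [MeasurableSpace Ω] [Fintype ι] [Nonempty ι]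
    (μ : Measure Ω) [IsProbabilityMeasure μ]
    (m K : ℕ) (hm : 0 < m) (hK : 0 < K) (c : ℝ) (hc : 0 < c)
    (ℓ : ι → ℝ) (hℓ : ∀ i, 0 < ℓ i)
    (X : Ω → ℝ) (g : ι → Ω → ℝ)
    (hXm : Measurable X) (hgm : ∀ i, Measurable (g i))
    (hindep : iIndepFun (fun o : Option ι => o.elim X g) μ)
    (hX : Measure.map X μ = gammaMeasure m 1)
    (hg : ∀ i, Measure.map (g i) μ = gammaMeasure K 1) :
    ∫ ω, Real.log (1 + c * X ω / ∑ i, ℓ i * g i ω) ∂μ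
      = ∫ z in Set.Ioi (0 : ℝ),
          (1 / z) * (1 - (1 + c * z) ^ (-(m : ℝ))) * ∏ i, (1 + ℓ i * z) ^ (-(K : ℝ)) := by
  have hm' : (0:ℝ) < m := Nat.cast_pos.2 hm
  have hK' : (0:ℝ) < K := Nat.cast_pos.2 hK
  set S : Ω → ℝ := fun ω => ∑ i, ℓ i * g i ω with hS
  have hSm : Measurable S := Finset.measurable_sum _ fun i _ => (hgm i).const_mul (ℓ i)
  have hXpos : ∀ᵐ ω ∂μ, 0 < X ω := ae_pos hXm hX
  have hgpos : ∀ᵐ ω ∂μ, ∀ i, 0 < g i ω := ae_all_iff.2 fun i => ae_pos (hgm i) (hg i)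
  have hSpos : ∀ᵐ ω ∂μ, 0 < S ω := hgpos.mono fun ω h =>
    Finset.sum_pos (fun i _ => mul_pos (hℓ i) (h i)) Finset.univ_nonempty
  -- mgf computations
  have hEB : ∀ z : ℝ, 0 < z →
      ∫ ω, Real.exp (-(z * (S ω + c * X ω))) ∂μ
        = (1 + c * z) ^ (-(m:ℝ)) * ∏ i, (1 + ℓ i * z) ^ (-(K:ℝ)) := by
    intro z hz
    set φ : Option ι → ℝ → ℝ := fun o => o.elim (fun x => c * x) (fun i x => ℓ i * x) with hφ
    have hφm : ∀ o, Measurable (φ o) := by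
      rintro (_ | i)
      · exact measurable_id.const_mul c
      · exact measurable_id.const_mul (ℓ i)
    have hcomp : iIndepFun
        (fun o => φ o ∘ (o.elim X g)) μ := hindep.comp φ hφm
    have hYfm : ∀ o : Option ι, Measurable (φ o ∘ (o.elim X g)) := by
      rintro (_ | i)
      · exact (hφm none).comp hXm
      · exact (hφm (some i)).comp (hgm i)
    have hsum := hcomp.mgf_sum hYfm Finset.univ (t := -z)
    have hfun : (∑ o : Option ι, (φ o ∘ (o.elim X g)))
        = fun ω => c * X ω + ∑ i, ℓ i * g i ω := by
      funext ω
      rw [Finset.sum_apply, Fintype.sum_option]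
      rfl
    rw [hfun, Fintype.prod_option] at hsum
    have hmgf_none : mgf (φ none ∘ Option.elim none X g) μ (-z) = (1 + c * z) ^ (-(m:ℝ)) := by
      show mgf (fun ω => c * X ω) μ (-z) = _
      unfold mgf
      have : ∀ ω, Real.exp ((-z) * (c * X ω)) = Real.exp (-((z * c) * X ω)) := fun ω => by
        ring_nf
      simp_rw [this]
      rw [exp_moment hXm hm' hX (by positivity), mul_comm z c]
    have hmgf_some : ∀ i, mgf (φ (some i) ∘ Option.elim (some i) X g) μ (-z)
        = (1 + ℓ i * z) ^ (-(K:ℝ)) := by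
      intro i
      show mgf (fun ω => ℓ i * g i ω) μ (-z) = _
      unfold mgf
      have : ∀ ω, Real.exp ((-z) * (ℓ i * g i ω)) = Real.exp (-((z * ℓ i) * g i ω)) :=
        fun ω => by ring_nf
      simp_rw [this]
      rw [exp_moment (hgm i) hK' (hg i) (mul_nonneg hz.le (hℓ i).le)]
      congr 2
      ring
    have hrw : ∀ ω, Real.exp (-(z * (S ω + c * X ω)))
        = Real.exp ((-z) * (c * X ω + ∑ i, ℓ i * g i ω)) := fun ω => by
      simp only [hS]
      ring_nf
    simp_rw [hrw]
    have : ∫ ω, Real.exp ((-z) * (c * X ω + ∑ i, ℓ i * g i ω)) ∂μ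
        = mgf (fun ω => c * X ω + ∑ i, ℓ i * g i ω) μ (-z) := rfl
    rw [this, hsum, hmgf_none, Finset.prod_congr rfl (fun i _ => hmgf_some i)]
  have hEA : ∀ z : ℝ, 0 < z →
      ∫ ω, Real.exp (-(z * S ω)) ∂μ = ∏ i, (1 + ℓ i * z) ^ (-(K:ℝ)) := by
    intro z hz
    set ψ : Option ι → ℝ → ℝ := fun o => o.elim (fun _ => 0) (fun i x => ℓ i * x) with hψ
    have hψm : ∀ o, Measurable (ψ o) := by
      rintro (_ | i)
      · exact measurable_const
      · exact measurable_id.const_mul (ℓ i)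
    have hcomp : iIndepFun
        (fun o => ψ o ∘ (o.elim X g)) μ := hindep.comp ψ hψm
    have hYfm : ∀ o : Option ι, Measurable (ψ o ∘ (o.elim X g)) := by
      rintro (_ | i)
      · exact (hψm none).comp hXm
      · exact (hψm (some i)).comp (hgm i)
    have hsum := hcomp.mgf_sum hYfm Finset.univ (t := -z)
    have hfun : (∑ o : Option ι, (ψ o ∘ (o.elim X g)))
        = fun ω => 0 + ∑ i, ℓ i * g i ω := by
      funext ω
      rw [Finset.sum_apply, Fintype.sum_option]
      rfl
    rw [hfun, Fintype.prod_option] at hsum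
    have hmgf_none : mgf (ψ none ∘ Option.elim none X g) μ (-z) = 1 := by
      show mgf (fun _ : Ω => (0:ℝ)) μ (-z) = 1
      unfold mgf
      simp [measure_univ]
    have hmgf_some : ∀ i, mgf (ψ (some i) ∘ Option.elim (some i) X g) μ (-z)
        = (1 + ℓ i * z) ^ (-(K:ℝ)) := by
      intro i
      show mgf (fun ω => ℓ i * g i ω) μ (-z) = _
      unfold mgf
      have : ∀ ω, Real.exp ((-z) * (ℓ i * g i ω)) = Real.exp (-((z * ℓ i) * g i ω)) :=
        fun ω => by ring_nf
      simp_rw [this]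
      rw [exp_moment (hgm i) hK' (hg i) (mul_nonneg hz.le (hℓ i).le)]
      congr 2
      ring
    have hrw : ∀ ω, Real.exp (-(z * S ω))
        = Real.exp ((-z) * (0 + ∑ i, ℓ i * g i ω)) := fun ω => by
      simp only [hS]
      ring_nf
    simp_rw [hrw]
    have : ∫ ω, Real.exp ((-z) * (0 + ∑ i, ℓ i * g i ω)) ∂μ
        = mgf (fun ω => 0 + ∑ i, ℓ i * g i ω) μ (-z) := rfl
    rw [this, hsum, hmgf_none, one_mul, Finset.prod_congr rfl (fun i _ => hmgf_some i)]
  -- integrability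
  have hIntA : ∀ z : ℝ, 0 < z → Integrable (fun ω => Real.exp (-(z * S ω))) μ := by
    intro z hz
    refine Integrable.mono' (integrable_const 1)
      ((hSm.const_mul z).neg.exp).aestronglyMeasurable ?_
    filter_upwards [hSpos] with ω h
    rw [Real.norm_eq_abs, abs_of_pos (Real.exp_pos _)]
    simpa using Real.exp_le_exp.2 (show -(z * S ω) ≤ 0 by nlinarith [mul_pos hz h])
  have hIntB : ∀ z : ℝ, 0 < z →
      Integrable (fun ω => Real.exp (-(z * (S ω + c * X ω)))) μ := by
    intro z hz
    refine Integrable.mono' (integrable_const 1)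
      ((hSm.add (hXm.const_mul c)).const_mul z).neg.exp.aestronglyMeasurable ?_
    filter_upwards [hSpos, hXpos] with ω h hx
    rw [Real.norm_eq_abs, abs_of_pos (Real.exp_pos _)]
    simpa using Real.exp_le_exp.2 (show -(z * (S ω + c * X ω)) ≤ 0 by
      nlinarith [mul_pos hz (by nlinarith [mul_pos hc hx] : 0 < S ω + c * X ω)])
  -- inner identity
  have inner_eq : ∀ z : ℝ, 0 < z →
      ∫⁻ ω, ENNReal.ofReal
          (z⁻¹ * (Real.exp (-(z * S ω)) - Real.exp (-(z * (S ω + c * X ω))))) ∂μ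
        = ENNReal.ofReal
          ((1 / z) * (1 - (1 + c * z) ^ (-(m:ℝ))) * ∏ i, (1 + ℓ i * z) ^ (-(K:ℝ))) := by
    intro z hz
    have hInt : Integrable (fun ω =>
        z⁻¹ * (Real.exp (-(z * S ω)) - Real.exp (-(z * (S ω + c * X ω))))) μ :=
      ((hIntA z hz).sub (hIntB z hz)).const_mul z⁻¹
    rw [← ofReal_integral_eq_lintegral_ofReal hInt
        (by
          filter_upwards [hXpos] with ω h
          refine mul_nonneg (inv_nonneg.2 hz.le) (sub_nonneg.2 (Real.exp_le_exp.2 ?_))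
          nlinarith [mul_pos hz (mul_pos hc h)])]
    congr 1
    rw [integral_const_mul, integral_sub (hIntA z hz) (hIntB z hz), hEA z hz, hEB z hz]
    ring
  -- measurability facts
  have hmLHS : AEStronglyMeasurable (fun ω => Real.log (1 + c * X ω / S ω)) μ :=
    ((measurable_const.add ((hXm.const_mul c).div hSm)).log).aestronglyMeasurable
  have hnnLHS : 0 ≤ᵐ[μ] fun ω => Real.log (1 + c * X ω / S ω) := by
    filter_upwards [hXpos, hSpos] with ω h1 h2
    refine Real.log_nonneg ?_
    have : 0 ≤ c * X ω / S ω := div_nonneg (mul_nonneg hc.le h1.le) h2.le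
    linarith
  have hmRHS : Measurable fun z : ℝ =>
      (1 / z) * (1 - (1 + c * z) ^ (-(m:ℝ))) * ∏ i, (1 + ℓ i * z) ^ (-(K:ℝ)) := by
    fun_prop
  have hnnRHS : 0 ≤ᵐ[volume.restrict (Ioi (0:ℝ))] fun z =>
      (1 / z) * (1 - (1 + c * z) ^ (-(m:ℝ))) * ∏ i, (1 + ℓ i * z) ^ (-(K:ℝ)) := by
    refine (ae_restrict_iff' measurableSet_Ioi).2 (ae_of_all _ fun z hz => ?_)
    have hz : (0:ℝ) < z := hz
    refine mul_nonneg (mul_nonneg (by positivity) (sub_nonneg.2 ?_))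
      (Finset.prod_nonneg fun i _ => (Real.rpow_pos_of_pos (by nlinarith [(hℓ i).le]) _).le)
    exact Real.rpow_le_one_of_one_le_of_nonpos (by nlinarith) (by simp)
  -- main chain
  show ∫ ω, Real.log (1 + c * X ω / S ω) ∂μ = _
  rw [integral_eq_lintegral_of_nonneg_ae hnnLHS hmLHS,
    integral_eq_lintegral_of_nonneg_ae hnnRHS hmRHS.aestronglyMeasurable.restrict]
  congr 1
  have hunc : Measurable (Function.uncurry fun (ω : Ω) (z : ℝ) =>
      ENNReal.ofReal (z⁻¹ * (Real.exp (-(z * S ω)) - Real.exp (-(z * (S ω + c * X ω)))))) := by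
    show Measurable fun p : Ω × ℝ => ENNReal.ofReal
      (p.2⁻¹ * (Real.exp (-(p.2 * S p.1)) - Real.exp (-(p.2 * (S p.1 + c * X p.1)))))
    fun_prop
  calc ∫⁻ ω, ENNReal.ofReal (Real.log (1 + c * X ω / S ω)) ∂μ
      = ∫⁻ ω, (∫⁻ z in Ioi (0:ℝ), ENNReal.ofReal
          (z⁻¹ * (Real.exp (-(z * S ω)) - Real.exp (-(z * (S ω + c * X ω)))))) ∂μ := by
        refine lintegral_congr_ae ?_
        filter_upwards [hXpos, hSpos] with ω h1 h2
        exact (frullani_lintegral h2 (mul_nonneg hc.le h1.le)).symm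
    _ = ∫⁻ z in Ioi (0:ℝ), (∫⁻ ω, ENNReal.ofReal
          (z⁻¹ * (Real.exp (-(z * S ω)) - Real.exp (-(z * (S ω + c * X ω))))) ∂μ) :=
        lintegral_lintegral_swap hunc.aemeasurable
    _ = ∫⁻ z in Ioi (0:ℝ), ENNReal.ofReal
          ((1 / z) * (1 - (1 + c * z) ^ (-(m:ℝ))) * ∏ i, (1 + ℓ i * z) ^ (-(K:ℝ))) :=
        setLIntegral_congr_fun measurableSet_Ioi (fun z hz => inner_eq z hz)
end

section
/- Let α > 2 and z > 0, r > 0 be real numbers. Then 2 ∫_r^∞ (1 − e^{−z r^α u^{−α}}) u du = r² (F(z,α) − 1), where F(z,α) = e^{−z} + z^{2/α} ∫₀^z t^{−2/α} e^{−t} dt. -/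
open MeasureTheory

/-- The paper's function `F(z,α) = e^{−z} + z^{2/α} ∫₀^z t^{−2/α} e^{−t} dt`
(lower incomplete gamma convention). -/
noncomputable def paperF (z α : ℝ) : ℝ :=
  Real.exp (-z) + z ^ (2 / α) * ∫ t in Set.Ioo (0 : ℝ) z, t ^ (-(2 / α)) * Real.exp (-t)

/-- Out-of-cell interference Laplace transform computation:
for `α > 2`, `z > 0`, `r > 0`,
`2∫_r^∞ (1 − e^{−z r^α u^{−α}}) u du = r²(F(z,α) − 1)`. -/
theorem interference_laplace_eq_F
    (α z r : ℝ) (hα : 2 < α) (hz : 0 < z) (hr : 0 < r) :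
    2 * ∫ u in Set.Ioi r, (1 - Real.exp (-(z * r ^ α * u ^ (-α)))) * u
      = r ^ 2 * (paperF z α - 1) := by
  have hα0 : (0:ℝ) < α := by linarith
  have hαne : α ≠ 0 := ne_of_gt hα0
  rw [paperF]
  set β : ℝ := 1/α with hβ
  have hβ0 : 0 < β := by positivity
  set p : ℝ := 2/α with hp0
  have hp_pos : 0 < p := by positivity
  have hp1 : p < 1 := by rw [hp0, div_lt_one hα0]; exact hα
  have hp2β : p = 2*β := by rw [hp0, hβ]; ring
  set f : ℝ → ℝ := fun t => (r * z^β) * t^(-β) with hf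
  set f' : ℝ → ℝ := fun t => (r * z^β) * (-β * t^(-β-1)) with hf'
  have hrz : 0 < r * z^β := by positivity
  -- the image of the substitution map
  have himg : f '' Set.Ioo 0 z = Set.Ioi r := by
    ext u
    constructor
    · rintro ⟨t, ⟨ht0, htz⟩, rfl⟩
      have h1 : t^β < z^β := Real.rpow_lt_rpow ht0.le htz hβ0
      have h2 : (1:ℝ) < z^β * t^(-β) := by
        rw [Real.rpow_neg ht0.le, ← div_eq_mul_inv, lt_div_iff₀ (Real.rpow_pos_of_pos ht0 β)]
        simpa using h1
      show r < (r * z^β) * t^(-β)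
      calc r = r * 1 := by ring
      _ < r * (z^β * t^(-β)) := by
        exact (mul_lt_mul_iff_right₀ hr).mpr h2
      _ = (r * z^β) * t^(-β) := by ring
    · intro hu
      have hru : r < u := hu
      have hu0 : 0 < u := hr.trans hru
      refine ⟨z * (r/u)^α, ⟨by positivity, ?_⟩, ?_⟩
      · have : (r/u)^α < 1 :=
          Real.rpow_lt_one (by positivity) ((div_lt_one hu0).mpr hru) hα0
        nlinarith [this, hz]
      · show (r * z^β) * (z * (r/u)^α)^(-β) = u
        have h1 : (z * (r/u)^α)^(-β) = z^(-β) * ((r/u)^α)^(-β) :=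
          Real.mul_rpow hz.le (by positivity)
        have h2 : ((r/u)^α)^(-β) = (r/u)^(α * -β) := by
          rw [Real.rpow_mul (by positivity : (0:ℝ) ≤ r/u)]
        have h3 : α * -β = -1 := by rw [hβ]; field_simp
        have h4 : (r/u)^(-1:ℝ) = u/r := by
          rw [Real.rpow_neg_one, inv_div]
        have h5 : z^β * z^(-β) = 1 := by
          rw [← Real.rpow_add hz]; simp
        rw [h1, h2, h3, h4]
        calc r * z^β * (z^(-β) * (u/r)) = (z^β * z^(-β)) * (r * (u/r)) := by ring
        _ = u := by rw [h5]; field_simp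
  have hderiv : ∀ t ∈ Set.Ioo (0:ℝ) z, HasDerivWithinAt f (f' t) (Set.Ioo 0 z) t := by
    intro t ht
    exact ((Real.hasDerivAt_rpow_const (Or.inl ht.1.ne')).const_mul
      (r * z^β)).hasDerivWithinAt
  have hinj : Set.InjOn f (Set.Ioo 0 z) := by
    have : StrictAntiOn f (Set.Ioo 0 z) := by
      intro a ha b hb hab
      exact (mul_lt_mul_iff_right₀ hrz).mpr
        (Real.rpow_lt_rpow_of_neg ha.1 hab (by linarith))
    exact this.injOn
  have hsub := integral_image_eq_integral_abs_deriv_smul measurableSet_Ioo hderiv hinj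
    (fun u => (1 - Real.exp (-(z * r ^ α * u ^ (-α)))) * u)
  rw [himg] at hsub
  -- pointwise simplification of the substituted integrand
  have hpt : Set.EqOn (fun t => |f' t| • ((1 - Real.exp (-(z * r ^ α * (f t) ^ (-α)))) * f t))
      (fun t => (β * (r^2 * z^p)) * ((1 - Real.exp (-t)) * t^(-p-1))) (Set.Ioo 0 z) := by
    intro t ht
    obtain ⟨ht0, htz⟩ := ht
    have habs : |f' t| = (r * z^β) * (β * t^(-β-1)) := by
      simp only [hf']
      rw [show (r * z^β) * (-β * t^(-β-1)) = -((r * z^β) * (β * t^(-β-1))) by ring,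
        abs_neg, abs_of_pos]
      have := Real.rpow_pos_of_pos ht0 (-β-1)
      positivity
    have hexp : z * r ^ α * (f t) ^ (-α) = t := by
      have h1 : (f t)^(-α) = (r * z^β)^(-α) * (t^(-β))^(-α) :=
        Real.mul_rpow hrz.le (Real.rpow_nonneg ht0.le _)
      have h2 : (t^(-β))^(-α) = t := by
        rw [← Real.rpow_mul ht0.le]
        rw [show -β * -α = β * α by ring, hβ, show 1/α * α = 1 by field_simp,
          Real.rpow_one]
      have h3 : (r * z^β)^(-α) = r^(-α) * (z^β)^(-α) :=
        Real.mul_rpow hr.le (Real.rpow_nonneg hz.le _)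
      have h4 : (z^β)^(-α) = z⁻¹ := by
        rw [← Real.rpow_mul hz.le, hβ, show 1/α * -α = -1 by field_simp,
          Real.rpow_neg_one]
      have h5 : r^α * r^(-α) = 1 := by
        rw [← Real.rpow_add hr]; simp
      rw [h1, h2, h3, h4]
      calc z * r^α * (r^(-α) * z⁻¹ * t) = (r^α * r^(-α)) * (z * z⁻¹) * t := by ring
      _ = t := by rw [h5, mul_inv_cancel₀ hz.ne']; ring
    have hz2 : z^β * z^β = z^p := by
      rw [← Real.rpow_add hz]; congr 1; rw [hp2β]; ring
    have ht2 : t^(-β-1) * t^(-β) = t^(-p-1) := by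
      rw [← Real.rpow_add ht0]; congr 1; rw [hp2β]; ring
    show |f' t| • ((1 - Real.exp (-(z * r ^ α * (f t) ^ (-α)))) * f t)
      = (β * (r^2 * z^p)) * ((1 - Real.exp (-t)) * t^(-p-1))
    rw [habs, hexp, smul_eq_mul]
    simp only [hf]
    rw [← hz2, ← ht2]
    ring
  rw [setIntegral_congr_fun measurableSet_Ioo hpt, MeasureTheory.integral_const_mul] at hsub
  -- integrability facts
  have hmono : IntegrableOn (fun t => t^(-p)) (Set.Ioc (0:ℝ) z) := by
    have := intervalIntegral.intervalIntegrable_rpow' (a := 0) (b := z)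
      (r := -p) (by linarith)
    rw [intervalIntegrable_iff_integrableOn_Ioc_of_le hz.le] at this
    exact this
  have hnorm_le : ∀ t ∈ Set.Ioc (0:ℝ) z,
      ‖(1 - Real.exp (-t)) * t^(-p-1)‖ ≤ ‖t^(-p)‖ := by
    intro t ht
    have ht0 : 0 < t := ht.1
    have he1 : Real.exp (-t) ≤ 1 := by calc Real.exp (-t) ≤ Real.exp 0 := Real.exp_le_exp.mpr (by linarith)
      _ = 1 := Real.exp_zero
    have he2 : 1 - Real.exp (-t) ≤ t := by
      have := Real.add_one_le_exp (-t); linarith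
    have hpw : 0 < t^(-p-1) := Real.rpow_pos_of_pos ht0 _
    have hpw2 : 0 < t^(-p) := Real.rpow_pos_of_pos ht0 _
    rw [Real.norm_eq_abs, Real.norm_eq_abs,
      abs_of_nonneg (mul_nonneg (by linarith) hpw.le), abs_of_nonneg hpw2.le]
    calc (1 - Real.exp (-t)) * t^(-p-1) ≤ t * t^(-p-1) := by
          exact mul_le_mul_of_nonneg_right he2 hpw.le
    _ = t^(-p) := by
          rw [show t * t^(-p-1) = t^(1:ℝ) * t^(-p-1) by rw [Real.rpow_one],
            ← Real.rpow_add ht0]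
          congr 1; ring
  have hcontI : ContinuousOn (fun t => (1 - Real.exp (-t)) * t^(-p-1)) (Set.Ioc (0:ℝ) z) := by
    apply ContinuousOn.mul
    · exact (continuous_const.sub (Real.continuous_exp.comp continuous_neg)).continuousOn
    · exact ContinuousOn.rpow_const continuousOn_id (fun t ht => Or.inl ht.1.ne')
  have hIplus : IntegrableOn (fun t => (1 - Real.exp (-t)) * t^(-p-1)) (Set.Ioc (0:ℝ) z) := by
    apply Integrable.mono hmono (hcontI.aestronglyMeasurable measurableSet_Ioc)
    exact (ae_restrict_iff' measurableSet_Ioc).mpr (Filter.Eventually.of_forall hnorm_le)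
  have hcontJ : ContinuousOn (fun t => t^(-p) * Real.exp (-t)) (Set.Ioc (0:ℝ) z) := by
    apply ContinuousOn.mul
    · exact ContinuousOn.rpow_const continuousOn_id (fun t ht => Or.inl ht.1.ne')
    · exact (Real.continuous_exp.comp continuous_neg).continuousOn
  have hJint : IntegrableOn (fun t => t^(-p) * Real.exp (-t)) (Set.Ioc (0:ℝ) z) := by
    apply Integrable.mono hmono (hcontJ.aestronglyMeasurable measurableSet_Ioc)
    refine (ae_restrict_iff' measurableSet_Ioc).mpr (Filter.Eventually.of_forall ?_)
    intro t ht
    have ht0 : 0 < t := ht.1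
    have he1 : Real.exp (-t) ≤ 1 := by calc Real.exp (-t) ≤ Real.exp 0 := Real.exp_le_exp.mpr (by linarith)
      _ = 1 := Real.exp_zero
    have hpw2 : 0 < t^(-p) := Real.rpow_pos_of_pos ht0 _
    rw [Real.norm_eq_abs, Real.norm_eq_abs,
      abs_of_nonneg (mul_nonneg hpw2.le (Real.exp_pos (-t)).le), abs_of_nonneg hpw2.le]
    nlinarith [Real.exp_pos (-t)]
  -- the FTC / integration-by-parts step
  have hftc : ∫ t in Set.Ioo (0:ℝ) z,
      ((1 - Real.exp (-t)) * t^(-p-1) - (α/2) * (t^(-p) * Real.exp (-t)))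
      = (α/2) * (z^(-p) * (Real.exp (-z) - 1)) := by
    set Kt : ℝ → ℝ :=
      fun t => if 0 < t then (α/2) * (t^(-p) * (Real.exp (-t) - 1)) else 0 with hKt
    have hKpos : ∀ t : ℝ, 0 < t → Kt t = (α/2) * (t^(-p) * (Real.exp (-t) - 1)) := by
      intro t ht; simp [hKt, ht]
    have hK0 : Kt 0 = 0 := by simp [hKt]
    have heqK : ∀ x : ℝ, 0 < x →
        Kt =ᶠ[nhds x] (fun t => (α/2) * (t^(-p) * (Real.exp (-t) - 1))) := by
      intro x hx
      filter_upwards [Ioi_mem_nhds hx] with y hy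
      exact hKpos y hy
    have hcontK : ContinuousOn Kt (Set.Icc 0 z) := by
      intro x hx
      rcases eq_or_lt_of_le hx.1 with heq | hx0
      · subst heq
        unfold ContinuousWithinAt
        rw [hK0]
        apply squeeze_zero_norm' (a := fun t => (α/2) * t^(1-p))
        · refine Filter.eventually_of_mem self_mem_nhdsWithin ?_
          intro t ht
          rcases eq_or_lt_of_le ht.1 with h0 | h0
          · subst h0
            rw [hK0, Real.zero_rpow (by linarith : (1:ℝ)-p ≠ 0)]
            simp
          · rw [hKpos t h0]
            have he1 : Real.exp (-t) ≤ 1 := by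
              calc Real.exp (-t) ≤ Real.exp 0 := Real.exp_le_exp.mpr (by linarith)
              _ = 1 := Real.exp_zero
            have he2 : 1 - Real.exp (-t) ≤ t := by
              have := Real.add_one_le_exp (-t); linarith
            have hpw : 0 < t^(-p) := Real.rpow_pos_of_pos h0 _
            have habs : |Real.exp (-t) - 1| ≤ t := by
              rw [abs_sub_comm, abs_of_nonneg (by linarith)]; linarith
            rw [Real.norm_eq_abs, abs_mul, abs_mul, abs_of_nonneg (by linarith : (0:ℝ) ≤ α/2),
              abs_of_nonneg hpw.le]
            have : t^(-p) * |Real.exp (-t) - 1| ≤ t^(-p) * t :=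
              mul_le_mul_of_nonneg_left habs hpw.le
            have hrw : t^(-p) * t = t^(1-p) := by
              rw [show t^(-p) * t = t^(-p) * t^(1:ℝ) by rw [Real.rpow_one],
                ← Real.rpow_add h0]
              congr 1; ring
            rw [hrw] at this
            nlinarith [this]
        · have hcont : ContinuousAt (fun t : ℝ => t^((1:ℝ)-p)) 0 :=
            Real.continuousAt_rpow_const 0 (1-p) (Or.inr (by linarith))
          have := (hcont.continuousWithinAt (s := Set.Icc 0 z)).const_smul (α/2)
          unfold ContinuousWithinAt at this
          simp only [Pi.smul_apply, smul_eq_mul, Real.zero_rpow (by linarith : (1:ℝ)-p ≠ 0), mul_zero] at this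
          exact this
      · have h1 : ContinuousAt (fun t : ℝ => t^(-p)) x :=
          Real.continuousAt_rpow_const x _ (Or.inl hx0.ne')
        have h2 : ContinuousAt (fun t : ℝ => (α/2) * (t^(-p) * (Real.exp (-t) - 1))) x :=
          continuousAt_const.mul (h1.mul
            (((Real.continuous_exp.comp continuous_neg).continuousAt).sub continuousAt_const))
        exact (h2.congr (heqK x hx0).symm).continuousWithinAt
    have hdK : ∀ x ∈ Set.Ioo (0:ℝ) z, HasDerivWithinAt Kt
        ((1 - Real.exp (-x)) * x^(-p-1) - (α/2) * (x^(-p) * Real.exp (-x))) (Set.Ioi x) x := by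
      intro x hx
      have hx0 := hx.1
      have h1 : HasDerivAt (fun t : ℝ => t^(-p)) (-p * x^(-p-1)) x :=
        Real.hasDerivAt_rpow_const (Or.inl hx0.ne')
      have h2 : HasDerivAt (fun t : ℝ => Real.exp (-t) - 1) (-Real.exp (-x)) x := by
        have h := ((Real.hasDerivAt_exp (-x)).comp x (hasDerivAt_neg x)).sub_const 1
        simpa using h
      have hD := (h1.mul h2).const_mul (α/2)
      have hD2 := hD.congr_of_eventuallyEq (heqK x hx0)
      have hαp : α/2 * p = 1 := by rw [hp0]; field_simp
      have hval : α/2 * (-p * x^(-p-1) * (Real.exp (-x) - 1) + (fun t : ℝ => t^(-p)) x * -Real.exp (-x))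
          = (1 - Real.exp (-x)) * x^(-p-1) - (α/2) * (x^(-p) * Real.exp (-x)) := by
        simp only
        linear_combination (-(x^(-p-1) * (Real.exp (-x) - 1))) * hαp
      exact (hD2.congr_deriv hval).hasDerivWithinAt
    have hint : IntervalIntegrable
        (fun t => (1 - Real.exp (-t)) * t^(-p-1) - (α/2) * (t^(-p) * Real.exp (-t))) volume 0 z := by
      rw [intervalIntegrable_iff_integrableOn_Ioc_of_le hz.le]
      exact hIplus.sub (hJint.const_mul _)
    have hmain := intervalIntegral.integral_eq_sub_of_hasDeriv_right_of_le hz.le hcontK hdK hint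
    rw [intervalIntegral.integral_of_le hz.le, MeasureTheory.integral_Ioc_eq_integral_Ioo] at hmain
    rw [hmain, hK0, hKpos z hz]
    ring
  have hI : (∫ t in Set.Ioo (0:ℝ) z, (1 - Real.exp (-t)) * t^(-p-1))
      = (α/2) * (z^(-p) * (Real.exp (-z) - 1))
        + (α/2) * ∫ t in Set.Ioo (0:ℝ) z, t^(-p) * Real.exp (-t) := by
    have h1 : IntegrableOn (fun t => (1 - Real.exp (-t)) * t^(-p-1)) (Set.Ioo (0:ℝ) z) :=
      hIplus.mono_set Set.Ioo_subset_Ioc_self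
    have h2 : IntegrableOn (fun t => (α/2) * (t^(-p) * Real.exp (-t))) (Set.Ioo (0:ℝ) z) :=
      (hJint.mono_set Set.Ioo_subset_Ioc_self).const_mul _
    rw [integral_sub h1 h2, MeasureTheory.integral_const_mul] at hftc
    linarith [hftc]
  rw [hsub, hI]
  -- final algebra
  have hzz : z^p * z^(-p) = 1 := by rw [← Real.rpow_add hz]; simp
  set J := ∫ t in Set.Ioo (0:ℝ) z, t^(-p) * Real.exp (-t) with hJ
  have hβα : β * α = 1 := by rw [hβ]; field_simp
  linear_combination (r^2 * z^p * z^(-p) * (Real.exp (-z) - 1) + r^2 * z^p * J) * hβα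
    + (r^2 * (Real.exp (-z) - 1)) * hzz
end

section
/- For every real α > 2, the function φ(a) := ∫₀^∞ (1 − e^{−za}) / (z F(z,α)) dz is strictly increasing and strictly concave on [0, ∞). -/
open MeasureTheory Set

namespace Statement7

variable {α : ℝ}

lemma hc01 (hα : 2 < α) : 0 < 2 / α ∧ 2 / α < 1 :=
  ⟨div_pos two_pos (by linarith), (div_lt_one (by linarith)).2 hα⟩

lemma intgd_integrableOn (hα : 2 < α) (z : ℝ) :
    IntegrableOn (fun t => t ^ (-(2 / α)) * Real.exp (-t)) (Ioo 0 z) := by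
  rcases le_or_gt z 0 with hz | hz
  · rw [Ioo_eq_empty (by intro h; exact absurd (hz.trans_lt h) (lt_irrefl _))]
    exact integrableOn_empty
  · have h1 : IntegrableOn (fun t : ℝ => t ^ (-(2 / α))) (Ioo 0 z) :=
      ((intervalIntegral.intervalIntegrable_rpow' (a := 0) (b := z)
        (by linarith [(hc01 hα).2])).1).mono_set Ioo_subset_Ioc_self
    refine h1.mono' ?_ ?_
    · have hm1 : Measurable fun t : ℝ => t ^ (-(2 / α)) := by measurability
      exact (hm1.mul (Real.continuous_exp.comp continuous_neg).measurable).aestronglyMeasurable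
    · refine (ae_restrict_iff' measurableSet_Ioo).2 (Filter.Eventually.of_forall fun t ht => ?_)
      have h0 : (0:ℝ) ≤ t ^ (-(2 / α)) := Real.rpow_nonneg ht.1.le _
      rw [Real.norm_eq_abs, abs_of_nonneg (mul_nonneg h0 (Real.exp_pos _).le)]
      calc t ^ (-(2 / α)) * Real.exp (-t) ≤ t ^ (-(2 / α)) * 1 := by
            exact mul_le_mul_of_nonneg_left (Real.exp_le_one_iff.2 (by linarith [ht.1])) h0
        _ = t ^ (-(2 / α)) := mul_one _

noncomputable def G (α z : ℝ) : ℝ := ∫ t in Ioo (0 : ℝ) z, t ^ (-(2 / α)) * Real.exp (-t)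

lemma G_nonneg_ae (hα : 2 < α) (z : ℝ) :
    0 ≤ᶠ[ae (volume.restrict (Ioo (0:ℝ) z))] fun t => t ^ (-(2 / α)) * Real.exp (-t) :=
  (ae_restrict_iff' measurableSet_Ioo).2 (Filter.Eventually.of_forall fun t ht =>
    mul_nonneg (Real.rpow_nonneg ht.1.le _) (Real.exp_pos _).le)

lemma G_mono (hα : 2 < α) : Monotone (G α) := by
  intro x y hxy
  exact setIntegral_mono_set (intgd_integrableOn hα y) (G_nonneg_ae hα y)
    (Filter.Eventually.of_forall (Ioo_subset_Ioo le_rfl hxy))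

lemma G_nonneg (hα : 2 < α) (z : ℝ) : 0 ≤ G α z :=
  setIntegral_nonneg measurableSet_Ioo fun t ht =>
    mul_nonneg (Real.rpow_nonneg ht.1.le _) (Real.exp_pos _).le

lemma paperF_eq (z : ℝ) : paperF z α = Real.exp (-z) + z ^ (2 / α) * G α z := rfl

lemma paperF_measurable (hα : 2 < α) : Measurable (fun z => paperF z α) := by
  have : Measurable (G α) := (G_mono hα).measurable
  exact (Real.continuous_exp.comp continuous_neg).measurable.add
    (((Real.continuous_rpow_const (le_of_lt (hc01 hα).1)).measurable).mul this)

lemma paperF_ge_exp (hα : 2 < α) {z : ℝ} (hz : 0 < z) : Real.exp (-z) ≤ paperF z α := by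
  rw [paperF_eq]
  nlinarith [G_nonneg hα z, Real.rpow_nonneg hz.le (2 / α)]

lemma paperF_pos (hα : 2 < α) {z : ℝ} (hz : 0 < z) : 0 < paperF z α :=
  (Real.exp_pos _).trans_le (paperF_ge_exp hα hz)

noncomputable def K (α : ℝ) : ℝ := G α 1

lemma K_pos (hα : 2 < α) : 0 < K α := by
  rw [K, G, setIntegral_pos_iff_support_of_nonneg_ae (G_nonneg_ae hα 1) (intgd_integrableOn hα 1)]
  refine lt_of_lt_of_le ?_ (measure_mono (fun t ht => ⟨?_, ht⟩))
  · rw [Real.volume_Ioo]; norm_num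
  · exact ne_of_gt (mul_pos (Real.rpow_pos_of_pos ht.1 _) (Real.exp_pos _))

lemma paperF_ge_rpow (hα : 2 < α) {z : ℝ} (hz : 1 ≤ z) :
    K α * z ^ (2 / α) ≤ paperF z α := by
  have hz0 : (0:ℝ) < z := lt_of_lt_of_le one_pos hz
  have h1 : K α ≤ G α z := G_mono hα hz
  have h2 : (0:ℝ) ≤ z ^ (2 / α) := Real.rpow_nonneg hz0.le _
  rw [paperF_eq]
  nlinarith [Real.exp_pos (-z)]

lemma num_nonneg {z a : ℝ} (hz : 0 ≤ z) (ha : 0 ≤ a) : 0 ≤ 1 - Real.exp (-(z * a)) := by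
  have : Real.exp (-(z * a)) ≤ 1 := Real.exp_le_one_iff.2 (by nlinarith)
  linarith

lemma num_le {z a : ℝ} : 1 - Real.exp (-(z * a)) ≤ z * a := by
  have := Real.add_one_le_exp (-(z * a)); linarith

lemma num_le_one {z a : ℝ} : 1 - Real.exp (-(z * a)) ≤ 1 := by
  have := Real.exp_pos (-(z * a)); linarith

lemma g_measurable (hα : 2 < α) (a : ℝ) :
    Measurable (fun z => (1 - Real.exp (-(z * a))) / (z * paperF z α)) := by
  exact (measurable_const.sub (((measurable_id.mul_const a).neg).exp)).div
    (measurable_id.mul (paperF_measurable hα))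

lemma g_nonneg (hα : 2 < α) {a : ℝ} (ha : 0 ≤ a) {z : ℝ} (hz : 0 < z) :
    0 ≤ (1 - Real.exp (-(z * a))) / (z * paperF z α) :=
  div_nonneg (num_nonneg hz.le ha) (mul_nonneg hz.le (paperF_pos hα hz).le)

lemma g_integrable (hα : 2 < α) {a : ℝ} (ha : 0 ≤ a) :
    IntegrableOn (fun z => (1 - Real.exp (-(z * a))) / (z * paperF z α)) (Ioi 0) := by
  have hmeas := (g_measurable hα a).aestronglyMeasurable (μ := volume)
  rw [← Ioc_union_Ioi_eq_Ioi (zero_le_one (α := ℝ))]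
  refine IntegrableOn.union ?_ ?_
  · -- on Ioc 0 1 : bounded by a * exp 1
    refine Integrable.mono' (g := fun _ => a * Real.exp 1)
      ((integrableOn_const_iff enorm_ne_top).2 (Or.inr (by rw [Real.volume_Ioc]; norm_num))) hmeas.restrict ?_
    refine (ae_restrict_iff' measurableSet_Ioc).2 (Filter.Eventually.of_forall fun z hz => ?_)
    have hz0 : 0 < z := hz.1
    have hF : Real.exp (-1) ≤ paperF z α :=
      le_trans (Real.exp_le_exp.2 (by linarith [hz.2])) (paperF_ge_exp hα hz0)
    have hd : (0:ℝ) < z * Real.exp (-1) := mul_pos hz0 (Real.exp_pos _)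
    rw [Real.norm_eq_abs, abs_of_nonneg (g_nonneg hα ha hz0)]
    calc (1 - Real.exp (-(z * a))) / (z * paperF z α)
        ≤ (z * a) / (z * Real.exp (-1)) := by
          refine div_le_div₀ (mul_nonneg hz0.le ha) num_le hd
            (mul_le_mul_of_nonneg_left hF hz0.le)
      _ = a / Real.exp (-1) := by rw [mul_div_mul_left _ _ (ne_of_gt hz0)]
      _ = a * Real.exp 1 := by rw [Real.exp_neg]; field_simp
  · -- on Ioi 1 : bounded by K⁻¹ * z ^ (-(1 + 2/α))
    refine Integrable.mono' (g := fun z => (K α)⁻¹ * z ^ (-(1 + 2 / α)))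
      ((integrableOn_Ioi_rpow_of_lt (by linarith [(hc01 hα).1]) one_pos).const_mul _)
      hmeas.restrict ?_
    refine (ae_restrict_iff' measurableSet_Ioi).2 (Filter.Eventually.of_forall fun z hz => ?_)
    have hz1 : (1:ℝ) ≤ z := le_of_lt hz
    have hz0 : (0:ℝ) < z := lt_of_lt_of_le one_pos hz1
    have hK := K_pos hα
    have hpow : (0:ℝ) < z ^ (1 + 2 / α) := Real.rpow_pos_of_pos hz0 _
    have hzz : z * z ^ (2 / α) = z ^ (1 + 2 / α) := by
      rw [Real.rpow_add hz0, Real.rpow_one]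
    have hF : K α * z ^ (1 + 2 / α) ≤ z * paperF z α := by
      calc K α * z ^ (1 + 2 / α) = z * (K α * z ^ (2 / α)) := by rw [← hzz]; ring
        _ ≤ z * paperF z α := mul_le_mul_of_nonneg_left (paperF_ge_rpow hα hz1) hz0.le
    rw [Real.norm_eq_abs, abs_of_nonneg (g_nonneg hα ha hz0)]
    calc (1 - Real.exp (-(z * a))) / (z * paperF z α)
        ≤ 1 / (K α * z ^ (1 + 2 / α)) :=
          div_le_div₀ zero_le_one num_le_one (mul_pos hK hpow) hF
      _ = (K α)⁻¹ * z ^ (-(1 + 2 / α)) := by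
          rw [Real.rpow_neg hz0.le, one_div, mul_inv]

lemma integral_Ioi_pos {h : ℝ → ℝ} (hi : IntegrableOn h (Ioi 0))
    (hpos : ∀ z ∈ Ioi (0:ℝ), 0 < h z) : 0 < ∫ z in Ioi (0:ℝ), h z := by
  rw [setIntegral_pos_iff_support_of_nonneg_ae
    ((ae_restrict_iff' measurableSet_Ioi).2 (Filter.Eventually.of_forall fun z hz => (hpos z hz).le)) hi]
  refine lt_of_lt_of_le ?_ (measure_mono (fun z hz => ⟨(hpos z hz).ne', hz⟩))
  rw [Real.volume_Ioi]; exact ENNReal.zero_lt_top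

end Statement7

open Statement7 in
/-- For every `α > 2`, the function
`φ(a) = ∫₀^∞ (1 − e^{−za})/(z F(z,α)) dz` is strictly increasing and strictly concave
on `[0, ∞)`. -/
theorem rate_strictMono_strictConcave (α : ℝ) (hα : 2 < α) :
    StrictMonoOn
        (fun a : ℝ => ∫ z in Set.Ioi (0 : ℝ), (1 - Real.exp (-(z * a))) / (z * paperF z α))
        (Set.Ici 0)
      ∧ StrictConcaveOn ℝ (Set.Ici 0)
        (fun a : ℝ => ∫ z in Set.Ioi (0 : ℝ), (1 - Real.exp (-(z * a))) / (z * paperF z α)) := by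
  constructor
  · intro a ha b hb hab
    have hIa := g_integrable hα (ha : (0:ℝ) ≤ a)
    have hIb := g_integrable hα (hb : (0:ℝ) ≤ b)
    simp only
    rw [← sub_pos, ← integral_sub hIb hIa]
    refine integral_Ioi_pos (hIb.sub hIa) (fun z hz => ?_)
    have hz0 : (0:ℝ) < z := hz
    have hexp : Real.exp (-(z * b)) < Real.exp (-(z * a)) :=
      Real.exp_lt_exp.2 (by nlinarith)
    have hd : (0:ℝ) < z * paperF z α := mul_pos hz0 (paperF_pos hα hz0)
    rw [sub_pos]
    exact (div_lt_div_iff_of_pos_right hd).2 (by linarith)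
  · refine ⟨convex_Ici 0, fun a ha b hb hab t s ht hs hts => ?_⟩
    simp only [smul_eq_mul]
    have hm : (0:ℝ) ≤ t * a + s * b :=
      add_nonneg (mul_nonneg ht.le ha) (mul_nonneg hs.le hb)
    have hIa := g_integrable hα (ha : (0:ℝ) ≤ a)
    have hIb := g_integrable hα (hb : (0:ℝ) ≤ b)
    have hIm := g_integrable hα hm
    rw [← sub_pos]
    have hsum : IntegrableOn (fun z => t * ((1 - Real.exp (-(z * a))) / (z * paperF z α))
        + s * ((1 - Real.exp (-(z * b))) / (z * paperF z α))) (Set.Ioi 0) :=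
      (hIa.const_mul t).add (hIb.const_mul s)
    have e1 := integral_sub hIm hsum
    have e2 := integral_add (μ := volume.restrict (Set.Ioi 0)) (hIa.const_mul t) (hIb.const_mul s)
    have e3 := integral_const_mul (μ := volume.restrict (Set.Ioi 0)) t
      (fun z => (1 - Real.exp (-(z * a))) / (z * paperF z α))
    have e4 := integral_const_mul (μ := volume.restrict (Set.Ioi 0)) s
      (fun z => (1 - Real.exp (-(z * b))) / (z * paperF z α))
    have hpos : 0 < ∫ z in Set.Ioi (0:ℝ),
        ((1 - Real.exp (-(z * (t * a + s * b)))) / (z * paperF z α)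
          - (t * ((1 - Real.exp (-(z * a))) / (z * paperF z α))
             + s * ((1 - Real.exp (-(z * b))) / (z * paperF z α)))) := by
      refine integral_Ioi_pos (hIm.sub hsum) (fun z hz => ?_)
      have hz0 : (0:ℝ) < z := hz
      have hd : (0:ℝ) < z * paperF z α := mul_pos hz0 (paperF_pos hα hz0)
      have hne : -(z * a) ≠ -(z * b) := by
        intro h
        exact hab (mul_left_cancel₀ hz0.ne' (neg_injective h))
      have hconv := strictConvexOn_exp.2 (mem_univ (-(z * a))) (mem_univ (-(z * b))) hne ht hs hts
      simp only [smul_eq_mul] at hconv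
      have hlin : t * -(z * a) + s * -(z * b) = -(z * (t * a + s * b)) := by ring
      rw [hlin] at hconv
      have hnum : t * (1 - Real.exp (-(z * a))) + s * (1 - Real.exp (-(z * b)))
          < 1 - Real.exp (-(z * (t * a + s * b))) := by nlinarith
      rw [sub_pos]
      calc t * ((1 - Real.exp (-(z * a))) / (z * paperF z α))
            + s * ((1 - Real.exp (-(z * b))) / (z * paperF z α))
          = (t * (1 - Real.exp (-(z * a))) + s * (1 - Real.exp (-(z * b)))) / (z * paperF z α) := by
            ring
        _ < (1 - Real.exp (-(z * (t * a + s * b)))) / (z * paperF z α) :=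
            (div_lt_div_iff_of_pos_right hd).2 hnum
    rw [e1, e2, e3, e4] at hpos
    linarith
end

section
/- Fix positive integers M_t, J, Q with M_t ≥ J(Q−1) + 1 and set A = M_t − J(Q−1) + 1. For positive integers K, L satisfying K L ≤ M_t − J(Q−1), define T(K, L) = K ∫₀^∞ (1 − e^{−z ((L+1)/2) (A − K L)/K}) / (z F(z,4)) dz. Then for every feasible pair (K, L) there exists a feasible K′ (i.e. a positive integer K′ ≤ M_t − J(Q−1)) with T(K′, 1) ≥ T(K, L); that is, the maximum of T over all feasible pairs is attained with cluster size L = 1. -/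
open MeasureTheory

/-- The (normalized) approximate communication area spectral efficiency at pathloss
exponent `α = 4`, with `K` served users per cell, communication cooperative cluster size
`L`, and `A = M_t − J(Q−1) + 1` available spatial degrees of freedom: the MISR gain factor
is `(L+1)/2` and `T(K,L) = K ∫₀^∞ (1 − e^{−z((L+1)/2)(A − KL)/K})/(z F(z,4)) dz`. -/
noncomputable def commASE (Mt J Q K L : ℕ) : ℝ :=
  (K : ℝ) * ∫ z in Set.Ioi (0 : ℝ),
    (1 - Real.exp (-(z * (((L : ℝ) + 1) / 2) *
        ((((Mt : ℝ) - (J : ℝ) * ((Q : ℝ) - 1) + 1) - (K : ℝ) * (L : ℝ)) / (K : ℝ)))))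
      / (z * paperF z 4)

namespace CommASEAux

open Set Real

/-- The integrand of the inner integral of `paperF · 4`. -/
noncomputable def f0 (t : ℝ) : ℝ := t ^ (-(2 / (4:ℝ))) * Real.exp (-t)

lemma f0_nonneg {t : ℝ} (ht : 0 ≤ t) : 0 ≤ f0 t :=
  mul_nonneg (Real.rpow_nonneg ht _) (Real.exp_nonneg _)

lemma measurable_rpow_const (r : ℝ) : Measurable fun x : ℝ => x ^ r :=
  measurable_of_continuousOn_compl_singleton 0
    (ContinuousOn.rpow_const continuousOn_id
      (fun x hx => Or.inl (Set.mem_compl_singleton_iff.mp hx)))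

lemma measurable_f0 : Measurable f0 :=
  (measurable_rpow_const _).mul (measurable_id.neg.exp)

lemma integrableOn_f0_Ioo (w : ℝ) : IntegrableOn f0 (Set.Ioo 0 w) := by
  rcases le_or_gt w 0 with hw | hw
  · rw [Set.Ioo_eq_empty (not_lt.mpr hw)]
    exact integrableOn_empty
  · have h1 : IntervalIntegrable (fun t : ℝ => t ^ (-(2 / (4:ℝ)))) volume 0 w :=
      intervalIntegral.intervalIntegrable_rpow' (by norm_num)
    have h2 : IntegrableOn (fun t : ℝ => t ^ (-(2 / (4:ℝ)))) (Set.Ioc 0 w) := h1.1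
    have h3 : IntegrableOn (fun t : ℝ => t ^ (-(2 / (4:ℝ)))) (Set.Ioo 0 w) :=
      h2.mono_set Set.Ioo_subset_Ioc_self
    refine h3.mono' (measurable_f0.aestronglyMeasurable) ?_
    rw [ae_restrict_iff' measurableSet_Ioo]
    refine Filter.Eventually.of_forall (fun t ht => ?_)
    have ht0 : 0 < t := ht.1
    have he : Real.exp (-t) ≤ 1 := Real.exp_le_one_iff.mpr (by linarith)
    have h0 : 0 ≤ t ^ (-(2 / (4:ℝ))) := Real.rpow_nonneg ht0.le _
    rw [Real.norm_eq_abs, abs_of_nonneg (f0_nonneg ht0.le)]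
    calc f0 t ≤ t ^ (-(2 / (4:ℝ))) * 1 :=
          mul_le_mul_of_nonneg_left he h0
      _ = t ^ (-(2 / (4:ℝ))) := mul_one _

/-- Inner integral as a function of the upper limit. -/
noncomputable def G (z : ℝ) : ℝ := ∫ t in Set.Ioo (0:ℝ) z, f0 t

lemma G_nonneg (z : ℝ) : 0 ≤ G z :=
  setIntegral_nonneg measurableSet_Ioo (fun t ht => f0_nonneg ht.1.le)

lemma G_mono : Monotone G := by
  intro z1 z2 h
  refine setIntegral_mono_set (integrableOn_f0_Ioo z2) ?_ ?_
  · filter_upwards [ae_restrict_mem measurableSet_Ioo] with t ht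
    simpa using f0_nonneg ht.1.le
  · exact HasSubset.Subset.eventuallyLE (Set.Ioo_subset_Ioo_right h)

lemma measurable_G : Measurable G := G_mono.measurable

lemma paperF4_eq (z : ℝ) : paperF z 4 = Real.exp (-z) + z ^ ((2:ℝ)/4) * G z := rfl

lemma measurable_paperF4 : Measurable fun z : ℝ => paperF z 4 := by
  simp only [paperF4_eq]
  exact (measurable_id.neg.exp).add ((measurable_rpow_const _).mul measurable_G)

lemma paperF4_pos {z : ℝ} (hz : 0 ≤ z) : 0 < paperF z 4 := by
  rw [paperF4_eq]
  have := G_nonneg z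
  have := Real.rpow_nonneg hz ((2:ℝ)/4)
  have := Real.exp_pos (-z)
  nlinarith


lemma integrableOn_f0_Ico {v w : ℝ} (hv : 0 < v) : IntegrableOn f0 (Set.Ico v w) :=
  (integrableOn_f0_Ioo (w + 1)).mono_set
    (fun t ht => ⟨lt_of_lt_of_le hv ht.1, by linarith [ht.2]⟩)

lemma G_split {v w : ℝ} (hv : 0 < v) (hvw : v ≤ w) :
    G w = G v + ∫ t in Set.Ico v w, f0 t := by
  have hset : Set.Ioo (0:ℝ) w = Set.Ioo 0 v ∪ Set.Ico v w := by
    ext t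
    simp only [Set.mem_Ioo, Set.mem_Ico, Set.mem_union]
    constructor
    · rintro ⟨h1, h2⟩
      rcases lt_or_ge t v with h | h
      · exact Or.inl ⟨h1, h⟩
      · exact Or.inr ⟨h, h2⟩
    · rintro (⟨h1, h2⟩ | ⟨h1, h2⟩)
      · exact ⟨h1, lt_of_lt_of_le h2 hvw⟩
      · exact ⟨lt_of_lt_of_le hv h1, h2⟩
  have hdisj : Disjoint (Set.Ioo (0:ℝ) v) (Set.Ico v w) := by
    rw [Set.disjoint_left]
    rintro t ⟨_, h2⟩ ⟨h3, _⟩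
    exact absurd h3 (not_le.mpr h2)
  unfold G
  rw [hset, setIntegral_union hdisj measurableSet_Ico (integrableOn_f0_Ioo v)
    (integrableOn_f0_Ico hv)]

lemma integrableOn_exp_neg_Ico {v w : ℝ} :
    IntegrableOn (fun t : ℝ => Real.exp (-t)) (Set.Ico v w) :=
  ((Real.continuous_exp.comp continuous_neg).integrableOn_Icc).mono_set
    Set.Ico_subset_Icc_self

lemma integral_Ico_exp_neg {v w : ℝ} (hvw : v ≤ w) :
    ∫ t in Set.Ico v w, Real.exp (-t) = Real.exp (-v) - Real.exp (-w) := by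
  rw [integral_Ico_eq_integral_Ioo, ← integral_Ioc_eq_integral_Ioo,
    ← intervalIntegral.integral_of_le hvw]
  have h := intervalIntegral.integral_comp_neg (a := v) (b := w) (fun x => Real.exp x)
  rw [h, integral_exp]

/-- Key inequality: `F(w) ≤ √(w/v) F(v)` for `0 < v ≤ w`. -/
lemma paperF4_le {v w : ℝ} (hv : 0 < v) (hvw : v ≤ w) :
    paperF w 4 ≤ Real.sqrt (w / v) * paperF v 4 := by
  have hw : 0 < w := lt_of_lt_of_le hv hvw
  have hIbound : ∫ t in Set.Ico v w, f0 t ≤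
      v ^ (-(2/(4:ℝ))) * (Real.exp (-v) - Real.exp (-w)) := by
    have h1 : ∫ t in Set.Ico v w, f0 t ≤
        ∫ t in Set.Ico v w, v ^ (-(2/(4:ℝ))) * Real.exp (-t) := by
      refine setIntegral_mono_on (integrableOn_f0_Ico hv)
        (integrableOn_exp_neg_Ico.const_mul _) measurableSet_Ico ?_
      intro t ht
      exact mul_le_mul_of_nonneg_right
        (Real.rpow_le_rpow_of_nonpos hv ht.1 (by norm_num))
        (Real.exp_nonneg _)
    rwa [MeasureTheory.integral_const_mul, integral_Ico_exp_neg hvw] at h1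
  -- rewrite rpow as sqrt
  have h24 : (2:ℝ)/4 = 1/2 := by norm_num
  have hWsqrt : w ^ ((2:ℝ)/4) = Real.sqrt w := by
    rw [h24, Real.sqrt_eq_rpow]
  have hVsqrt : v ^ (-(2/(4:ℝ))) = (Real.sqrt v)⁻¹ := by
    rw [show -(2/(4:ℝ)) = -(1/2) by norm_num, Real.rpow_neg hv.le, Real.sqrt_eq_rpow]
  have hsv : 0 < Real.sqrt v := Real.sqrt_pos.mpr hv
  have hsrat : Real.sqrt (w / v) = Real.sqrt w / Real.sqrt v := Real.sqrt_div hw.le v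
  have hr1 : 1 ≤ Real.sqrt (w / v) := by
    rw [show (1:ℝ) = Real.sqrt 1 by simp]
    exact Real.sqrt_le_sqrt ((one_le_div hv).mpr hvw)
  have hwv : Real.sqrt w = Real.sqrt (w / v) * Real.sqrt v := by
    rw [hsrat]; field_simp
  -- expand paperF
  rw [paperF4_eq, paperF4_eq, hWsqrt, G_split hv hvw]
  have hVG : v ^ ((2:ℝ)/4) = Real.sqrt v := by rw [h24, Real.sqrt_eq_rpow]
  rw [hVG]
  set I := ∫ t in Set.Ico v w, f0 t with hI
  have hsvI : Real.sqrt v * I ≤ Real.exp (-v) - Real.exp (-w) := by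
    have := mul_le_mul_of_nonneg_left hIbound hsv.le
    rwa [hVsqrt, ← mul_assoc, mul_inv_cancel₀ hsv.ne', one_mul] at this
  have hGv : 0 ≤ G v := G_nonneg v
  have hew : 0 ≤ Real.exp (-w) := Real.exp_nonneg _
  rw [hwv]
  nlinarith [mul_le_mul_of_nonneg_left hsvI (le_trans zero_le_one hr1),
    mul_nonneg (sub_nonneg.mpr hr1) hew, hwv]


lemma integrand_nonneg {a : ℝ} (ha : 0 ≤ a) {z : ℝ} (hz : z ∈ Set.Ioi (0:ℝ)) :
    0 ≤ (1 - Real.exp (-(z * a))) / (z * paperF z 4) := by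
  have hz0 : (0:ℝ) < z := hz
  have h1 : Real.exp (-(z * a)) ≤ 1 :=
    Real.exp_le_one_iff.mpr (by nlinarith)
  exact div_nonneg (by linarith) (mul_nonneg hz0.le (paperF4_pos hz0.le).le)

lemma measurable_integrand (a : ℝ) :
    Measurable fun z : ℝ => (1 - Real.exp (-(z * a))) / (z * paperF z 4) :=
  (measurable_const.sub ((measurable_id.mul_const a).neg.exp)).div
    (measurable_id.mul measurable_paperF4)

set_option maxHeartbeats 1000000 in
/-- Main comparison: stretching the exponent rate by `cL²` costs at most a factor `cL`. -/
lemma integral_le (a cL : ℝ) (ha : 0 < a) (hcL : 1 ≤ cL) :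
    (∫ z in Set.Ioi (0:ℝ), (1 - Real.exp (-(z * (cL^2 * a)))) / (z * paperF z 4))
      ≤ cL * ∫ z in Set.Ioi (0:ℝ), (1 - Real.exp (-(z * a))) / (z * paperF z 4) := by
  have hcL0 : (0:ℝ) < cL := lt_of_lt_of_le one_pos hcL
  set c : ℝ := cL ^ 2 with hc_def
  have hc1 : (1:ℝ) ≤ c := by nlinarith
  have hc0 : (0:ℝ) < c := lt_of_lt_of_le one_pos hc1
  set g : ℝ → ℝ := fun z => (1 - Real.exp (-(z * (c * a)))) / (z * paperF z 4) with hg_def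
  set q : ℝ → ℝ := fun z => (1 - Real.exp (-(z * a))) / (z * paperF z 4) with hq_def
  set p : ℝ → ℝ := fun w => (1 - Real.exp (-(w * a))) / (w * paperF (w / c) 4) with hp_def
  -- substitution z = w / c
  have hcomp : ∀ x : ℝ, g (c⁻¹ * x) = c * p x := by
    intro x
    have hxexp : (c⁻¹ * x) * (c * a) = x * a := by field_simp
    have hden : (c⁻¹ * x) * paperF (c⁻¹ * x) 4 = (x * paperF (x / c) 4) / c := by
      rw [inv_mul_eq_div]; field_simp; try ring
    simp only [hg_def, hp_def, hxexp, hden, div_div_eq_mul_div]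
    try ring
  have hsub : (∫ z in Set.Ioi (0:ℝ), g z) = ∫ w in Set.Ioi (0:ℝ), p w := by
    have h1 := MeasureTheory.integral_comp_mul_left_Ioi g 0 (inv_pos.mpr hc0)
    simp only [mul_zero, inv_inv, smul_eq_mul] at h1
    have h2 : (∫ x in Set.Ioi (0:ℝ), g (c⁻¹ * x)) = c * ∫ w in Set.Ioi (0:ℝ), p w := by
      rw [show (fun x => g (c⁻¹ * x)) = fun x => c * p x from funext hcomp]
      exact MeasureTheory.integral_const_mul c p
    rw [h2] at h1
    exact (mul_left_cancel₀ hc0.ne' h1.symm)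
  -- pointwise bounds on Ioi 0
  have hq_nonneg : ∀ z ∈ Set.Ioi (0:ℝ), 0 ≤ q z := fun z hz => integrand_nonneg ha.le hz
  have hg_nonneg : ∀ z ∈ Set.Ioi (0:ℝ), 0 ≤ g z := fun z hz =>
    integrand_nonneg (by positivity) hz
  have hp_nonneg : ∀ w ∈ Set.Ioi (0:ℝ), 0 ≤ p w := by
    intro w hw
    have hw0 : (0:ℝ) < w := hw
    have h1 : Real.exp (-(w * a)) ≤ 1 := Real.exp_le_one_iff.mpr (by nlinarith)
    exact div_nonneg (by linarith)
      (mul_nonneg hw0.le (paperF4_pos (by positivity : (0:ℝ) ≤ w / c)).le)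
  have hqg : ∀ z ∈ Set.Ioi (0:ℝ), q z ≤ g z := by
    intro z hz
    have hz0 : (0:ℝ) < z := hz
    have hden : 0 < z * paperF z 4 := mul_pos hz0 (paperF4_pos hz0.le)
    refine (div_le_div_iff_of_pos_right hden).mpr ?_
    have h2 : Real.exp (-(z * (c * a))) ≤ Real.exp (-(z * a)) :=
      Real.exp_le_exp.mpr (by nlinarith [mul_nonneg (mul_pos hz0 ha).le (sub_nonneg.mpr hc1)])
    linarith
  have hpq : ∀ w ∈ Set.Ioi (0:ℝ), p w ≤ cL * q w := by
    intro w hw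
    have hw0 : (0:ℝ) < w := hw
    have hv0 : (0:ℝ) < w / c := by positivity
    have hvw : w / c ≤ w := div_le_self hw0.le hc1
    have hkey : paperF w 4 ≤ cL * paperF (w / c) 4 := by
      have h1 := paperF4_le hv0 hvw
      have h2 : w / (w / c) = c := by field_simp
      rw [h2] at h1
      rwa [hc_def, Real.sqrt_sq hcL0.le] at h1
    have hFw : 0 < paperF w 4 := paperF4_pos hw0.le
    have hFv : 0 < paperF (w / c) 4 := paperF4_pos hv0.le
    have hnum : 0 ≤ 1 - Real.exp (-(w * a)) := by
      have : Real.exp (-(w * a)) ≤ 1 := Real.exp_le_one_iff.mpr (by nlinarith)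
      linarith
    have hcLq : cL * q w = (cL * (1 - Real.exp (-(w * a)))) / (w * paperF w 4) := by
      rw [hq_def]; ring
    rw [hp_def, hcLq]
    rw [div_le_div_iff₀ (by positivity) (by positivity)]
    nlinarith [mul_le_mul_of_nonneg_left hkey (mul_nonneg hnum hw0.le)]
  -- conclude by case analysis on integrability of g
  by_cases hInt : MeasureTheory.IntegrableOn g (Set.Ioi (0:ℝ))
  · have hq_meas : MeasureTheory.AEStronglyMeasurable q
        (MeasureTheory.volume.restrict (Set.Ioi (0:ℝ))) :=
      (measurable_integrand a).aestronglyMeasurable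
    have hqInt : MeasureTheory.IntegrableOn q (Set.Ioi (0:ℝ)) := by
      refine MeasureTheory.Integrable.mono hInt hq_meas ?_
      filter_upwards [MeasureTheory.ae_restrict_mem measurableSet_Ioi] with z hz
      rw [Real.norm_eq_abs, Real.norm_eq_abs, abs_of_nonneg (hq_nonneg z hz),
        abs_of_nonneg (hg_nonneg z hz)]
      exact hqg z hz
    have hstep : (∫ w in Set.Ioi (0:ℝ), p w) ≤ ∫ w in Set.Ioi (0:ℝ), cL * q w := by
      refine MeasureTheory.integral_mono_of_nonneg ?_ (hqInt.const_mul cL) ?_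
      · filter_upwards [MeasureTheory.ae_restrict_mem measurableSet_Ioi] with w hw
        exact hp_nonneg w hw
      · filter_upwards [MeasureTheory.ae_restrict_mem measurableSet_Ioi] with w hw
        exact hpq w hw
    calc (∫ z in Set.Ioi (0:ℝ), g z) = ∫ w in Set.Ioi (0:ℝ), p w := hsub
      _ ≤ ∫ w in Set.Ioi (0:ℝ), cL * q w := hstep
      _ = cL * ∫ w in Set.Ioi (0:ℝ), q w := MeasureTheory.integral_const_mul cL q
  · have hzero : (∫ z in Set.Ioi (0:ℝ), g z) = 0 := MeasureTheory.integral_undef hInt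
    rw [hzero]
    exact mul_nonneg hcL0.le (MeasureTheory.setIntegral_nonneg measurableSet_Ioi hq_nonneg)

end CommASEAux

set_option maxHeartbeats 1000000 in
/-- **Proposition 2.** With pathloss exponent `α = 4`, for every feasible
pair `(K, L)` (positive integers with `K·L + J(Q−1) ≤ M_t`) there is a feasible `K′`
(a positive integer with `K′ + J(Q−1) ≤ M_t`) such that `T(K′, 1) ≥ T(K, L)`: the maximum
of the communication ASE is attained with cluster size `L = 1` (no interference nulling). -/
theorem commASE_max_at_L_one
    (Mt J Q : ℕ) (hMt : 0 < Mt) (hJ : 0 < J) (hQ : 0 < Q)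
    (hfeas : J * (Q - 1) + 1 ≤ Mt) :
    ∀ K L : ℕ, 0 < K → 0 < L → K * L + J * (Q - 1) ≤ Mt →
      ∃ K' : ℕ, 0 < K' ∧ K' + J * (Q - 1) ≤ Mt ∧
        commASE Mt J Q K L ≤ commASE Mt J Q K' 1 := by
  intro K L hK hL hKL
  refine ⟨K * L, Nat.mul_pos hK hL, hKL, ?_⟩
  simp only [commASE, Nat.cast_mul, Nat.cast_one]
  set A : ℝ := (Mt : ℝ) - (J : ℝ) * ((Q : ℝ) - 1) + 1 with hA_def
  have hKpos : (0:ℝ) < (K:ℝ) := by exact_mod_cast hK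
  have hLpos : (0:ℝ) < (L:ℝ) := by exact_mod_cast hL
  have hL1 : (1:ℝ) ≤ (L:ℝ) := by exact_mod_cast hL
  have hKL0 : (0:ℝ) < (K:ℝ) * (L:ℝ) := mul_pos hKpos hLpos
  have hcast : (K:ℝ) * (L:ℝ) + (J:ℝ) * ((Q:ℝ) - 1) ≤ (Mt:ℝ) := by
    have h := (Nat.cast_le (α := ℝ)).mpr hKL
    push_cast [Nat.cast_sub hQ] at h
    linarith
  have hA1 : 1 ≤ A - (K:ℝ) * (L:ℝ) := by rw [hA_def]; linarith
  set a : ℝ := (A - (K:ℝ) * (L:ℝ)) / ((K:ℝ) * (L:ℝ)) with ha_def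
  have ha : 0 < a := div_pos (by linarith) hKL0
  set cL : ℝ := Real.sqrt ((L:ℝ) * ((L:ℝ) + 1) / 2) with hcL_def
  have hhalf : (1:ℝ) ≤ (L:ℝ) * ((L:ℝ) + 1) / 2 := by nlinarith
  have hcL1 : (1:ℝ) ≤ cL := by
    have h := Real.sqrt_le_sqrt hhalf
    rwa [Real.sqrt_one] at h
  have hcLsq : cL ^ 2 = (L:ℝ) * ((L:ℝ) + 1) / 2 :=
    Real.sq_sqrt (by linarith)
  have hcLL : cL ≤ (L:ℝ) := by
    have h := Real.sqrt_le_sqrt (show (L:ℝ) * ((L:ℝ) + 1) / 2 ≤ (L:ℝ)^2 by nlinarith)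
    rwa [Real.sqrt_sq hLpos.le] at h
  have eL : ∀ z : ℝ, z * (((L:ℝ) + 1) / 2) * ((A - (K:ℝ) * (L:ℝ)) / (K:ℝ))
      = z * (cL ^ 2 * a) := by
    intro z
    rw [hcLsq, ha_def]
    field_simp
    try ring
  have eR : ∀ z : ℝ, z * (((1:ℝ) + 1) / 2) * ((A - (K:ℝ) * (L:ℝ) * 1) / ((K:ℝ) * (L:ℝ)))
      = z * a := by
    intro z
    rw [ha_def]
    field_simp
    try ring
  simp only [eL, eR]
  have main := CommASEAux.integral_le a cL ha hcL1
  have hq0 : 0 ≤ ∫ z in Set.Ioi (0:ℝ), (1 - Real.exp (-(z * a))) / (z * paperF z 4) :=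
    MeasureTheory.setIntegral_nonneg measurableSet_Ioi
      (fun z hz => CommASEAux.integrand_nonneg ha.le hz)
  nlinarith [mul_le_mul_of_nonneg_left main hKpos.le,
    mul_nonneg (mul_nonneg hKpos.le (sub_nonneg.mpr hcLL)) hq0]
end

section
/- Let α > 2 be real and L ≥ 1 be real. Then there exists a unique v ∈ (0, 1/L) such that ∫₀^∞ (1 − e^{−z(1/v − L)} − (z/v) e^{−z(1/v − L)}) / (z F(z,α)) dz = 0. -/
open MeasureTheory

namespace OUL

open Set Real Filter Topology

lemma xexp_le (x : ℝ) : x * Real.exp (-x) ≤ Real.exp (-1) := by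
  have h := Real.add_one_le_exp (x - 1)
  have h3 : x * Real.exp (-x) ≤ Real.exp (x - 1) * Real.exp (-x) :=
    mul_le_mul_of_nonneg_right (by linarith) (Real.exp_pos _).le
  calc x * Real.exp (-x) ≤ Real.exp (x - 1) * Real.exp (-x) := h3
    _ = Real.exp (-1) := by rw [← Real.exp_add]; congr 1; ring

noncomputable def fα (α : ℝ) : ℝ → ℝ := fun t => t ^ (-(2 / α)) * Real.exp (-t)

lemma hp_pos {α : ℝ} (hα : 2 < α) : 0 < 2 / α := by positivity
lemma hp_lt_one {α : ℝ} (hα : 2 < α) : 2 / α < 1 :=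
  (div_lt_one (by linarith)).2 (by linarith)

lemma f_nonneg {α : ℝ} {t : ℝ} (ht : 0 ≤ t) : 0 ≤ fα α t :=
  mul_nonneg (Real.rpow_nonneg ht _) (Real.exp_pos _).le

lemma f_pos {α : ℝ} {t : ℝ} (ht : 0 < t) : 0 < fα α t :=
  mul_pos (Real.rpow_pos_of_pos ht _) (Real.exp_pos _)

lemma f_intOn {α : ℝ} (hα : 2 < α) : IntegrableOn (fα α) (Ioi 0) := by
  have h1 : (0:ℝ) < 1 - 2 / α := by have := hp_lt_one hα; linarith
  have h := Real.GammaIntegral_convergent h1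
  refine h.congr_fun (fun x hx => ?_) measurableSet_Ioi
  have : x ^ (1 - 2 / α - 1) = x ^ (-(2 / α)) := by congr 1; ring
  beta_reduce; rw [this, mul_comm]; rfl

lemma f_intOn_Ioo {α : ℝ} (hα : 2 < α) (z : ℝ) : IntegrableOn (fα α) (Ioo 0 z) :=
  (f_intOn hα).mono_set Set.Ioo_subset_Ioi_self

noncomputable def innerI (α z : ℝ) : ℝ := ∫ t in Ioo (0:ℝ) z, fα α t

noncomputable def Gc (α : ℝ) : ℝ := ∫ t in Ioi (0:ℝ), fα α t

lemma paperF_eq (α z : ℝ) : paperF z α = Real.exp (-z) + z ^ (2/α) * innerI α z := rfl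

lemma innerI_nonneg (α z : ℝ) : 0 ≤ innerI α z :=
  setIntegral_nonneg measurableSet_Ioo (fun t ht => f_nonneg ht.1.le)

lemma Gc_nonneg (α : ℝ) : 0 ≤ Gc α :=
  setIntegral_nonneg measurableSet_Ioi (fun t ht => f_nonneg (le_of_lt ht))

lemma innerI_le_Gc {α : ℝ} (hα : 2 < α) (z : ℝ) : innerI α z ≤ Gc α := by
  refine setIntegral_mono_set (f_intOn hα) ?_ (HasSubset.Subset.eventuallyLE Set.Ioo_subset_Ioi_self)
  filter_upwards [ae_restrict_mem measurableSet_Ioi] with t ht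
  exact f_nonneg (le_of_lt ht)

lemma innerI_mono {α : ℝ} (hα : 2 < α) {z₁ z₂ : ℝ} (h : z₁ ≤ z₂) : innerI α z₁ ≤ innerI α z₂ := by
  refine setIntegral_mono_set (f_intOn_Ioo hα z₂) ?_
    (HasSubset.Subset.eventuallyLE (Set.Ioo_subset_Ioo_right h))
  filter_upwards [ae_restrict_mem measurableSet_Ioo] with t ht
  exact f_nonneg ht.1.le

lemma innerI_one_pos {α : ℝ} (hα : 2 < α) : 0 < innerI α 1 := by
  rw [innerI]
  rw [setIntegral_pos_iff_support_of_nonneg_ae ?h1 (f_intOn_Ioo hα 1)]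
  · have hsub : Ioo (0:ℝ) 1 ⊆ Function.support (fα α) := fun t ht => (f_pos ht.1).ne'
    have : Function.support (fα α) ∩ Ioo 0 1 = Ioo 0 1 := Set.inter_eq_right.2 hsub
    rw [this, Real.volume_Ioo]
    norm_num
  case h1 =>
    filter_upwards [ae_restrict_mem measurableSet_Ioo] with t ht
    exact f_nonneg ht.1.le

/-- C1 bound -/
lemma paperF_pos {α z : ℝ} (hz : 0 < z) : 0 < paperF z α := by
  rw [paperF_eq]
  have := innerI_nonneg α z
  positivity

lemma paperF_le_C1 {α z : ℝ} (hα : 2 < α) (hz : 0 < z) (hz1 : z ≤ 1) :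
    paperF z α ≤ 1 + Gc α := by
  rw [paperF_eq]
  have h1 : Real.exp (-z) ≤ 1 := Real.exp_le_one_iff.2 (by linarith)
  have h2 : z ^ (2/α) * innerI α z ≤ 1 * Gc α :=
    mul_le_mul (Real.rpow_le_one hz.le hz1 (hp_pos hα).le) (innerI_le_Gc hα z)
      (innerI_nonneg α z) zero_le_one
  linarith [h2]

lemma paperF_ge_exp {α z : ℝ} (hz : 0 ≤ z) : Real.exp (-z) ≤ paperF z α := by
  rw [paperF_eq]
  have := innerI_nonneg α z
  nlinarith [Real.rpow_nonneg hz (2/α)]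

lemma paperF_ge_explow {α z : ℝ} (hz : 0 ≤ z) (hz1 : z ≤ 1) : Real.exp (-1) ≤ paperF z α :=
  le_trans (Real.exp_le_exp.2 (by linarith)) (paperF_ge_exp hz)

lemma one_le_rpow' {z p : ℝ} (hz : 1 ≤ z) (hp : 0 ≤ p) : 1 ≤ z ^ p := by
  calc (1:ℝ) = 1 ^ p := (Real.one_rpow p).symm
    _ ≤ z ^ p := Real.rpow_le_rpow zero_le_one hz hp

lemma paperF_ge_cz {α z : ℝ} (hα : 2 < α) (hz : 1 ≤ z) :
    innerI α 1 * z ^ (2/α) ≤ paperF z α := by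
  rw [paperF_eq]
  have h2 : innerI α 1 ≤ innerI α z := innerI_mono hα hz
  nlinarith [Real.exp_pos (-z), Real.rpow_pos_of_pos (lt_of_lt_of_le one_pos hz) (2/α),
    innerI_nonneg α 1]

lemma paperF_le_C1z {α z : ℝ} (hα : 2 < α) (hz : 1 ≤ z) :
    paperF z α ≤ (1 + Gc α) * z ^ (2/α) := by
  rw [paperF_eq]
  have h1 : Real.exp (-z) ≤ z ^ (2/α) :=
    le_trans (Real.exp_le_one_iff.2 (by linarith)) (one_le_rpow' hz (hp_pos hα).le)
  have h2 : innerI α z ≤ Gc α := innerI_le_Gc hα z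
  nlinarith [Real.rpow_pos_of_pos (lt_of_lt_of_le one_pos hz) (2/α)]

/-- the weight -/
noncomputable def w (α : ℝ) : ℝ → ℝ := fun z => 1 / (z * paperF z α)

lemma w_pos {α z : ℝ} (hz : 0 < z) : 0 < w α z := by
  have := paperF_pos (α := α) hz
  rw [w]; positivity

lemma zw_eq {α z : ℝ} (hz : 0 < z) : z * w α z = 1 / paperF z α := by
  have hF := (paperF_pos (α := α) hz).ne'
  rw [w]; field_simp

lemma zw_le_e {α z : ℝ} (hz : 0 < z) (hz1 : z ≤ 1) : z * w α z ≤ Real.exp 1 := by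
  rw [zw_eq hz]
  have h1 := paperF_ge_explow (α := α) hz.le hz1
  have h2 : (0:ℝ) < Real.exp (-1) := Real.exp_pos _
  calc 1 / paperF z α ≤ 1 / Real.exp (-1) := by
        apply one_div_le_one_div_of_le h2 h1
    _ = Real.exp 1 := by rw [Real.exp_neg]; field_simp

lemma zw_ge {α z : ℝ} (hα : 2 < α) (hz : 0 < z) (hz1 : z ≤ 1) :
    1 / (1 + Gc α) ≤ z * w α z := by
  rw [zw_eq hz]
  exact one_div_le_one_div_of_le (paperF_pos hz) (paperF_le_C1 hα hz hz1)


/-- majorant for `min 1 z * w z` -/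
noncomputable def DD (α : ℝ) : ℝ → ℝ := fun z =>
  if z ≤ 1 then Real.exp 1 else z ^ (-(1 + 2/α)) / innerI α 1

lemma DD_intOn {α : ℝ} (hα : 2 < α) : IntegrableOn (DD α) (Ioi 0) := by
  have hsplit : Ioi (0:ℝ) = Ioc 0 1 ∪ Ioi 1 := (Ioc_union_Ioi_eq_Ioi zero_le_one).symm
  rw [hsplit]
  apply IntegrableOn.union
  · have : IntegrableOn (fun _ : ℝ => Real.exp 1) (Ioc 0 1) := integrableOn_const (by
      rw [Real.volume_Ioc]; norm_num)
    exact this.congr_fun (fun z hz => by simp [DD, hz.2]) measurableSet_Ioc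
  · have h1 : IntegrableOn (fun z : ℝ => z ^ (-(1 + 2/α))) (Ioi 1) := by
      rw [integrableOn_Ioi_rpow_iff one_pos]
      have := hp_pos hα; linarith
    have h2 : IntegrableOn (fun z : ℝ => z ^ (-(1 + 2/α)) / innerI α 1) (Ioi 1) :=
      h1.div_const _
    exact h2.congr_fun
      (fun z hz => by simp only [DD, not_le.2 (mem_Ioi.1 hz), if_false]) measurableSet_Ioi

lemma minw_le_DD {α : ℝ} (hα : 2 < α) {z : ℝ} (hz : 0 < z) :
    min 1 z * w α z ≤ DD α z := by
  rcases le_or_gt z 1 with h1 | h1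
  · rw [min_eq_right h1, DD, if_pos h1]
    exact zw_le_e hz h1
  · rw [min_eq_left h1.le, DD, if_neg (not_le.2 h1), one_mul]
    have hc := innerI_one_pos hα
    have hFz : innerI α 1 * z ^ (2/α) ≤ paperF z α := paperF_ge_cz hα h1.le
    have hzp : (0:ℝ) < z ^ (2/α) := Real.rpow_pos_of_pos hz _
    have hden : 0 < z * (innerI α 1 * z ^ (2/α)) := by positivity
    have h2 : w α z ≤ 1 / (z * (innerI α 1 * z ^ (2/α))) := by
      rw [w]
      apply one_div_le_one_div_of_le hden
      exact mul_le_mul_of_nonneg_left hFz hz.le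
    calc w α z ≤ 1 / (z * (innerI α 1 * z ^ (2/α))) := h2
      _ = z ^ (-(1 + 2/α)) / innerI α 1 := by
          rw [Real.rpow_neg hz.le, Real.rpow_add hz, Real.rpow_one]
          field_simp

lemma minw_nonneg {α : ℝ} {z : ℝ} (hz : 0 < z) : 0 ≤ min 1 z * w α z :=
  mul_nonneg (le_min zero_le_one hz.le) (w_pos hz).le

/-- continuity of paperF on Ioi 0 -/
lemma f_intervalIntegrable {α : ℝ} (hα : 2 < α) (a b : ℝ) :
    IntervalIntegrable (fα α) volume a b := by
  have h1 : IntervalIntegrable (fun t : ℝ => t ^ (-(2/α))) volume a b :=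
    intervalIntegral.intervalIntegrable_rpow' (by have := hp_lt_one hα; linarith)
  exact h1.mul_continuousOn (Continuous.continuousOn (by continuity))

lemma continuousOn_innerI {α : ℝ} (hα : 2 < α) : ContinuousOn (innerI α) (Ioi 0) := by
  have hcont : Continuous (fun z => ∫ t in (0:ℝ)..z, fα α t) :=
    intervalIntegral.continuous_primitive (fun a b => f_intervalIntegrable hα a b) 0
  apply hcont.continuousOn.congr
  intro z hz
  rw [innerI, ← MeasureTheory.integral_Ioc_eq_integral_Ioo,
    ← intervalIntegral.integral_of_le (le_of_lt (mem_Ioi.1 hz))]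

lemma continuousOn_paperF {α : ℝ} (hα : 2 < α) :
    ContinuousOn (fun z => paperF z α) (Ioi 0) := by
  have h1 : ContinuousOn (fun z : ℝ => Real.exp (-z)) (Ioi 0) :=
    (Real.continuous_exp.comp continuous_neg).continuousOn
  have h2 : ContinuousOn (fun z : ℝ => z ^ (2/α)) (Ioi 0) := by
    intro z hz
    exact (Real.continuousAt_rpow_const z _ (Or.inl (ne_of_gt (mem_Ioi.1 hz)))).continuousWithinAt
  exact h1.add (h2.mul (continuousOn_innerI hα))

lemma continuousOn_w {α : ℝ} (hα : 2 < α) : ContinuousOn (w α) (Ioi 0) := by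
  apply ContinuousOn.div continuousOn_const
    (continuousOn_id.mul (continuousOn_paperF hα))
  intro z hz
  have := paperF_pos (α := α) (mem_Ioi.1 hz)
  have hz' := mem_Ioi.1 hz
  exact mul_ne_zero hz'.ne' this.ne'

lemma integrable_minw {α : ℝ} (hα : 2 < α) :
    IntegrableOn (fun z => min 1 z * w α z) (Ioi 0) := by
  apply (DD_intOn hα).mono' ?meas
  · filter_upwards [ae_restrict_mem measurableSet_Ioi] with z hz
    rw [Real.norm_eq_abs, abs_of_nonneg (minw_nonneg (mem_Ioi.1 hz))]
    exact minw_le_DD hα (mem_Ioi.1 hz)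
  case meas =>
    exact (((continuous_const.min continuous_id).continuousOn).mul
      (continuousOn_w hα)).aestronglyMeasurable measurableSet_Ioi


/-! ### The main integrand and integral -/

noncomputable def gz (L s z : ℝ) : ℝ :=
  1 - Real.exp (-(z * (s - L))) - z * s * Real.exp (-(z * (s - L)))

noncomputable def igrand (α L s : ℝ) : ℝ → ℝ := fun z => gz L s z * w α z

noncomputable def Iv (α L s : ℝ) : ℝ := ∫ z in Ioi (0:ℝ), igrand α L s z

lemma gz_eq (L s z : ℝ) :
    gz L s z = 1 - (1 + z * s) * Real.exp (-(z * (s - L))) := by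
  rw [gz]; ring

lemma continuous_gz_z (L s : ℝ) : Continuous (gz L s) := by
  unfold gz; continuity

lemma continuous_gz_s (L z : ℝ) : Continuous (fun s => gz L s z) := by
  unfold gz; continuity

lemma one_sub_exp_le (u : ℝ) : 1 - Real.exp (-u) ≤ u := by
  have := Real.add_one_le_exp (-u); linarith

lemma gz_abs_le {L a b s z : ℝ} (hL : 0 < L) (haL : L < a) (has : a ≤ s) (hsb : s ≤ b)
    (hz : 0 < z) :
    |gz L s z| ≤ (1 + 2 * b + b * Real.exp (-1) / (a - L)) * min 1 z := by
  have hsL : 0 < s - L := by linarith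
  have hs0 : 0 < s := by linarith
  have hb0 : 0 < b := by linarith
  have haL' : 0 < a - L := by linarith
  set E := Real.exp (-(z * (s - L))) with hE
  have hE0 : 0 < E := Real.exp_pos _
  have hE1 : E ≤ 1 := Real.exp_le_one_iff.2 (by nlinarith)
  have hg1 : 0 ≤ 1 - E := by linarith
  have hg2 : 0 ≤ z * s * E := by positivity
  have habs : |gz L s z| ≤ (1 - E) + z * s * E := by
    rw [gz, ← hE]; rw [abs_le]; constructor <;> nlinarith
  rcases le_or_gt z 1 with h1 | h1
  · rw [min_eq_right h1]
    have h2 : 1 - E ≤ z * b := by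
      have := one_sub_exp_le (z * (s - L))
      nlinarith
    have h3 : z * s * E ≤ z * b := by nlinarith [mul_nonneg (mul_nonneg hz.le hs0.le) (sub_nonneg.2 hE1), mul_nonneg hz.le (sub_nonneg.2 hsb)]
    have h4 : (0:ℝ) ≤ b * Real.exp (-1) / (a - L) * z :=
      mul_nonneg (div_nonneg (by positivity) haL'.le) hz.le
    calc |gz L s z| ≤ (1 - E) + z * s * E := habs
      _ ≤ z * b + z * b := by linarith
      _ ≤ (1 + 2 * b + b * Real.exp (-1) / (a - L)) * z := by nlinarith
  · rw [min_eq_left h1.le, mul_one]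
    have h2 : 1 - E ≤ 1 := by linarith
    have hEa : E ≤ Real.exp (-(z * (a - L))) := by
      apply Real.exp_le_exp.2; nlinarith
    have hEa0 : 0 < Real.exp (-(z * (a - L))) := Real.exp_pos _
    have h3 : z * Real.exp (-(z * (a - L))) ≤ Real.exp (-1) / (a - L) := by
      rw [le_div_iff₀ haL']
      nlinarith [xexp_le (z * (a - L))]
    have h4 : z * s * E ≤ b * (Real.exp (-1) / (a - L)) := by
      calc z * s * E ≤ z * b * E := by
            nlinarith [mul_nonneg (mul_nonneg (sub_nonneg.2 hsb) hz.le) hE0.le]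
        _ ≤ z * b * Real.exp (-(z * (a - L))) := by
            nlinarith [mul_nonneg (mul_nonneg hz.le hb0.le) (sub_nonneg.2 hEa)]
        _ = b * (z * Real.exp (-(z * (a - L)))) := by ring
        _ ≤ b * (Real.exp (-1) / (a - L)) := mul_le_mul_of_nonneg_left h3 hb0.le
    have hma : b * (Real.exp (-1) / (a - L)) = b * Real.exp (-1) / (a - L) :=
      (mul_div_assoc _ _ _).symm
    calc |gz L s z| ≤ (1 - E) + z * s * E := habs
      _ ≤ 1 + 2 * b + b * Real.exp (-1) / (a - L) := by linarith

lemma igrand_aesm {α : ℝ} (hα : 2 < α) (L s : ℝ) :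
    AEStronglyMeasurable (igrand α L s) (volume.restrict (Ioi 0)) :=
  (((continuous_gz_z L s).continuousOn).mul (continuousOn_w hα)).aestronglyMeasurable
    measurableSet_Ioi

lemma igrand_intOn {α L s : ℝ} (hα : 2 < α) (hL : 0 < L) (hs : L < s) :
    IntegrableOn (igrand α L s) (Ioi 0) := by
  set a := (L + s) / 2 with ha
  have haL : L < a := by rw [ha]; linarith
  have has : a ≤ s := by rw [ha]; linarith
  set M := 1 + 2 * s + s * Real.exp (-1) / (a - L) with hM
  apply Integrable.mono' ((integrable_minw hα).const_mul M) (igrand_aesm hα L s)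
  filter_upwards [ae_restrict_mem measurableSet_Ioi] with z hz
  have hz' := mem_Ioi.1 hz
  rw [igrand, Real.norm_eq_abs, abs_mul, abs_of_nonneg (w_pos hz').le]
  calc |gz L s z| * w α z ≤ (M * min 1 z) * w α z := by
        apply mul_le_mul_of_nonneg_right ?_ (w_pos hz').le
        exact gz_abs_le hL haL has le_rfl hz'
    _ = M * (min 1 z * w α z) := by ring

lemma gz_strict {L s₁ s₂ z : ℝ} (hL : 0 < L) (h1 : L < s₁) (h12 : s₁ < s₂) (hz : 0 < z) :
    gz L s₁ z < gz L s₂ z := by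
  have hφ : ∀ s ∈ Icc s₁ s₂, HasDerivAt (fun s => (1 + z * s) * Real.exp (-(z * (s - L))))
      (-(z ^ 2 * s * Real.exp (-(z * (s - L))))) s := by
    intro s _
    have hd1 : HasDerivAt (fun s : ℝ => 1 + z * s) z s := by
      simpa using ((hasDerivAt_id s).const_mul z).const_add 1
    have hd2 : HasDerivAt (fun s : ℝ => -(z * (s - L))) (-z) s := by
      have := (((hasDerivAt_id s).sub_const L).const_mul z).neg
      simp only [mul_one, id_eq] at this
      exact this
    have hd3 := hd2.exp
    have := hd1.mul hd3
    exact this.congr_deriv (by ring)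
  have hanti : StrictAntiOn (fun s => (1 + z * s) * Real.exp (-(z * (s - L)))) (Icc s₁ s₂) := by
    apply strictAntiOn_of_deriv_neg (convex_Icc _ _)
    · exact Continuous.continuousOn (by continuity)
    · intro s hs
      rw [interior_Icc] at hs
      rw [(hφ s (Ioo_subset_Icc_self hs)).deriv]
      have hs0 : 0 < s := by linarith [hs.1]
      have hpos : 0 < z ^ 2 * s * Real.exp (-(z * (s - L))) := by positivity
      linarith
  have := hanti (left_mem_Icc.2 h12.le) (right_mem_Icc.2 h12.le) h12
  rw [gz_eq, gz_eq]
  simpa using this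

lemma Iv_strictMono {α L : ℝ} (hα : 2 < α) (hL : 0 < L) {s₁ s₂ : ℝ}
    (h1 : L < s₁) (h12 : s₁ < s₂) : Iv α L s₁ < Iv α L s₂ := by
  have hi1 := igrand_intOn hα hL h1
  have hi2 := igrand_intOn hα hL (lt_trans h1 h12)
  have key : ∀ z ∈ Ioi (0:ℝ), igrand α L s₁ z < igrand α L s₂ z := by
    intro z hz
    have hz' := mem_Ioi.1 hz
    have hg := gz_strict hL h1 h12 hz'
    have hw := w_pos (α := α) hz'
    exact mul_lt_mul_of_pos_right hg hw
  have hpos : 0 < ∫ z in Ioi (0:ℝ), (igrand α L s₂ z - igrand α L s₁ z) := by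
    have hnn : 0 ≤ᵐ[volume.restrict (Ioi (0:ℝ))]
        fun z => igrand α L s₂ z - igrand α L s₁ z := by
      filter_upwards [ae_restrict_mem measurableSet_Ioi] with z hz
      have := key z hz
      simp only [Pi.zero_apply]
      linarith
    rw [setIntegral_pos_iff_support_of_nonneg_ae hnn (hi2.sub hi1)]
    have hsub : Ioi (0:ℝ) ⊆
        Function.support (fun z => igrand α L s₂ z - igrand α L s₁ z) := by
      intro z hz
      exact Function.mem_support.2 (sub_pos.2 (key z hz)).ne'
    have heq : Function.support (fun z => igrand α L s₂ z - igrand α L s₁ z) ∩ Ioi 0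
        = Ioi 0 := Set.inter_eq_right.2 hsub
    rw [heq, Real.volume_Ioi]
    simp
  rw [integral_sub hi2 hi1] at hpos
  unfold Iv
  linarith

lemma Iv_continuousAt {α L : ℝ} (hα : 2 < α) (hL : 0 < L) {s₀ : ℝ} (hs : L < s₀) :
    ContinuousAt (Iv α L) s₀ := by
  set a := (L + s₀) / 2 with ha
  set b := s₀ + 1 with hb
  have haL : L < a := by rw [ha]; linarith
  have has : a < s₀ := by rw [ha]; linarith
  have hsb : s₀ < b := by rw [hb]; linarith
  set M := 1 + 2 * b + b * Real.exp (-1) / (a - L) with hM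
  apply MeasureTheory.continuousAt_of_dominated
    (bound := fun z => M * (min 1 z * w α z))
  · exact Filter.Eventually.of_forall (fun s => igrand_aesm hα L s)
  · filter_upwards [Ioo_mem_nhds has hsb] with s hs'
    filter_upwards [ae_restrict_mem measurableSet_Ioi] with z hz
    have hz' := mem_Ioi.1 hz
    rw [igrand, Real.norm_eq_abs, abs_mul, abs_of_nonneg (w_pos hz').le]
    calc |gz L s z| * w α z ≤ (M * min 1 z) * w α z := by
          apply mul_le_mul_of_nonneg_right ?_ (w_pos hz').le
          exact gz_abs_le hL haL hs'.1.le hs'.2.le hz'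
      _ = M * (min 1 z * w α z) := by ring
  · exact (integrable_minw hα).const_mul M
  · filter_upwards [ae_restrict_mem measurableSet_Ioi] with z _
    exact ((continuous_gz_s L z).mul continuous_const).continuousAt


/-! ### Negative value near L -/

noncomputable def Af (α : ℝ) (ε : ℝ) : ℝ :=
  ∫ z in Ioi (0:ℝ), (1 - Real.exp (-(z * ε))) * w α z

noncomputable def Bf (α L s : ℝ) : ℝ :=
  ∫ z in Ioi (0:ℝ), (z * s * Real.exp (-(z * (s - L)))) * w α z

lemma part_bound {L s z : ℝ} (hL : 0 < L) (hs : L < s) (hz : 0 < z) :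
    z * s * Real.exp (-(z * (s - L))) ≤ (s + s * Real.exp (-1) / (s - L)) * min 1 z := by
  have hsL : 0 < s - L := by linarith
  have hs0 : 0 < s := by linarith
  set E := Real.exp (-(z * (s - L))) with hE
  have hE0 : 0 < E := Real.exp_pos _
  have hE1 : E ≤ 1 := Real.exp_le_one_iff.2 (by nlinarith)
  have hnn : (0:ℝ) ≤ s * Real.exp (-1) / (s - L) := by positivity
  rcases le_or_gt z 1 with h1 | h1
  · rw [min_eq_right h1]
    have : z * s * E ≤ z * s := by nlinarith [mul_nonneg (mul_nonneg hz.le hs0.le) (sub_nonneg.2 hE1)]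
    nlinarith
  · rw [min_eq_left h1.le, mul_one]
    have h3 : z * E ≤ Real.exp (-1) / (s - L) := by
      rw [le_div_iff₀ hsL, hE]
      nlinarith [xexp_le (z * (s - L))]
    calc z * s * E = s * (z * E) := by ring
      _ ≤ s * (Real.exp (-1) / (s - L)) := mul_le_mul_of_nonneg_left h3 hs0.le
      _ = s * Real.exp (-1) / (s - L) := (mul_div_assoc _ _ _).symm
      _ ≤ s + s * Real.exp (-1) / (s - L) := by linarith

lemma Af_int {α : ℝ} (hα : 2 < α) {ε : ℝ} (hε : 0 ≤ ε) (hε1 : ε ≤ 1) :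
    IntegrableOn (fun z => (1 - Real.exp (-(z * ε))) * w α z) (Ioi 0) := by
  apply Integrable.mono' (integrable_minw hα)
  · exact ((Continuous.continuousOn (by continuity)).mul
      (continuousOn_w hα)).aestronglyMeasurable measurableSet_Ioi
  · filter_upwards [ae_restrict_mem measurableSet_Ioi] with z hz
    have hz' := mem_Ioi.1 hz
    have hE1 : Real.exp (-(z * ε)) ≤ 1 := Real.exp_le_one_iff.2 (by nlinarith)
    have hE0 : (0:ℝ) < Real.exp (-(z * ε)) := Real.exp_pos _
    have h2 : 1 - Real.exp (-(z * ε)) ≤ min 1 z := by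
      apply le_min (by linarith)
      have := one_sub_exp_le (z * ε)
      nlinarith
    rw [Real.norm_eq_abs, abs_mul, abs_of_nonneg (w_pos hz').le,
      abs_of_nonneg (by linarith : (0:ℝ) ≤ 1 - Real.exp (-(z * ε)))]
    exact mul_le_mul_of_nonneg_right h2 (w_pos hz').le

lemma Bf_int {α L s : ℝ} (hα : 2 < α) (hL : 0 < L) (hs : L < s) :
    IntegrableOn (fun z => (z * s * Real.exp (-(z * (s - L)))) * w α z) (Ioi 0) := by
  apply Integrable.mono' ((integrable_minw hα).const_mul (s + s * Real.exp (-1) / (s - L)))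
  · exact ((Continuous.continuousOn (by continuity)).mul
      (continuousOn_w hα)).aestronglyMeasurable measurableSet_Ioi
  · filter_upwards [ae_restrict_mem measurableSet_Ioi] with z hz
    have hz' := mem_Ioi.1 hz
    have hs0 : 0 < s := by linarith
    have hnn : (0:ℝ) ≤ z * s * Real.exp (-(z * (s - L))) := by positivity
    rw [Real.norm_eq_abs, abs_mul, abs_of_nonneg (w_pos hz').le, abs_of_nonneg hnn]
    calc z * s * Real.exp (-(z * (s - L))) * w α z
        ≤ ((s + s * Real.exp (-1) / (s - L)) * min 1 z) * w α z :=
          mul_le_mul_of_nonneg_right (part_bound hL hs hz') (w_pos hz').le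
      _ = (s + s * Real.exp (-1) / (s - L)) * (min 1 z * w α z) := by ring

lemma Iv_eq_sub {α L s : ℝ} (hα : 2 < α) (hL : 0 < L) (hs : L < s) (hs1 : s ≤ L + 1) :
    Iv α L s = Af α (s - L) - Bf α L s := by
  have heq : igrand α L s = fun z =>
      (1 - Real.exp (-(z * (s - L)))) * w α z
        - (z * s * Real.exp (-(z * (s - L)))) * w α z := by
    funext z; rw [igrand, gz]; ring
  rw [Iv, heq, integral_sub (Af_int hα (by linarith) (by linarith)) (Bf_int hα hL hs)]
  rfl

lemma Bf_ge {α L s : ℝ} (hα : 2 < α) (hL : 1 ≤ L) (hs : L < s) (hs1 : s ≤ L + 1) :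
    L * Real.exp (-1) / (1 + Gc α) ≤ Bf α L s := by
  have hL0 : (0:ℝ) < L := by linarith
  have hC1 : (0:ℝ) < 1 + Gc α := by linarith [Gc_nonneg α]
  set c₀ := L * Real.exp (-1) / (1 + Gc α) with hc₀
  have step2 : c₀ ≤ ∫ z in Ioc (0:ℝ) 1, (z * s * Real.exp (-(z * (s - L)))) * w α z := by
    have hint : IntegrableOn (fun z => (z * s * Real.exp (-(z * (s - L)))) * w α z)
        (Ioc (0:ℝ) 1) := (Bf_int hα hL0 hs).mono_set Ioc_subset_Ioi_self
    have hconst : IntegrableOn (fun _ : ℝ => c₀) (Ioc (0:ℝ) 1) := by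
      exact integrableOn_const (by rw [Real.volume_Ioc]; norm_num)
    have hmono := setIntegral_mono_on hconst hint measurableSet_Ioc ?_
    · calc c₀ = ∫ _ in Ioc (0:ℝ) 1, c₀ := by
            rw [setIntegral_const, Real.volume_real_Ioc]; norm_num
        _ ≤ _ := hmono
    · intro z hz
      have hz0 := hz.1
      have hz1 := hz.2
      have hzw := zw_ge hα hz0 hz1
      have hE : Real.exp (-1) ≤ Real.exp (-(z * (s - L))) := by
        apply Real.exp_le_exp.2; nlinarith
      have hE0 : (0:ℝ) < Real.exp (-1) := Real.exp_pos _
      have hwE : (0:ℝ) < Real.exp (-(z * (s - L))) := Real.exp_pos _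
      have hzw0 : (0:ℝ) < z * w α z := mul_pos hz0 (w_pos hz0)
      have hre : (z * s * Real.exp (-(z * (s - L)))) * w α z
          = s * Real.exp (-(z * (s - L))) * (z * w α z) := by ring
      rw [hre, hc₀, div_eq_mul_one_div]
      calc L * Real.exp (-1) * (1 / (1 + Gc α))
          ≤ s * Real.exp (-1) * (1 / (1 + Gc α)) := by
            apply mul_le_mul_of_nonneg_right ?_ (by positivity)
            nlinarith
        _ ≤ s * Real.exp (-(z * (s - L))) * (1 / (1 + Gc α)) := by
            apply mul_le_mul_of_nonneg_right ?_ (by positivity)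
            nlinarith
        _ ≤ s * Real.exp (-(z * (s - L))) * (z * w α z) := by
            apply mul_le_mul_of_nonneg_left hzw ?_
            nlinarith
  have step1 : ∫ z in Ioc (0:ℝ) 1, (z * s * Real.exp (-(z * (s - L)))) * w α z ≤ Bf α L s := by
    rw [Bf]
    apply setIntegral_mono_set (Bf_int hα hL0 hs) ?_
      (HasSubset.Subset.eventuallyLE Ioc_subset_Ioi_self)
    filter_upwards [ae_restrict_mem measurableSet_Ioi] with z hz
    have hz' := mem_Ioi.1 hz
    have hs0 : (0:ℝ) < s := by linarith
    have hw := w_pos (α := α) hz'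
    exact (mul_pos (mul_pos (mul_pos hz' hs0) (Real.exp_pos _)) hw).le
  linarith

lemma Af_tendsto {α : ℝ} (hα : 2 < α) :
    Tendsto (fun n : ℕ => Af α (1 / (n + 1))) atTop (𝓝 0) := by
  have key : Tendsto (fun n : ℕ => ∫ z in Ioi (0:ℝ),
      (1 - Real.exp (-(z * (1 / (n + 1))))) * w α z) atTop
      (𝓝 (∫ _ in Ioi (0:ℝ), (0:ℝ))) := by
    apply MeasureTheory.tendsto_integral_of_dominated_convergence
      (bound := fun z => min 1 z * w α z)
    · intro n
      exact ((Continuous.continuousOn (by continuity)).mul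
        (continuousOn_w hα)).aestronglyMeasurable measurableSet_Ioi
    · exact integrable_minw hα
    · intro n
      filter_upwards [ae_restrict_mem measurableSet_Ioi] with z hz
      have hz' := mem_Ioi.1 hz
      have hεn : (0:ℝ) < 1 / ((n:ℝ) + 1) := by positivity
      have hεn1 : (1:ℝ) / ((n:ℝ) + 1) ≤ 1 := by
        rw [div_le_one (by positivity)]; linarith [Nat.cast_nonneg (α := ℝ) n]
      have hE1 : Real.exp (-(z * (1 / ((n:ℝ) + 1)))) ≤ 1 :=
        Real.exp_le_one_iff.2 (by nlinarith)
      have hE0 : (0:ℝ) < Real.exp (-(z * (1 / ((n:ℝ) + 1)))) := Real.exp_pos _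
      have h2 : 1 - Real.exp (-(z * (1 / ((n:ℝ) + 1)))) ≤ min 1 z := by
        apply le_min (by linarith)
        have := one_sub_exp_le (z * (1 / ((n:ℝ) + 1)))
        nlinarith
      rw [Real.norm_eq_abs, abs_mul, abs_of_nonneg (w_pos hz').le,
        abs_of_nonneg (by linarith : (0:ℝ) ≤ 1 - Real.exp (-(z * (1 / ((n:ℝ) + 1)))))]
      exact mul_le_mul_of_nonneg_right h2 (w_pos hz').le
    · filter_upwards [ae_restrict_mem measurableSet_Ioi] with z _
      have h1 : Tendsto (fun n : ℕ => (1:ℝ) / (n + 1)) atTop (𝓝 0) :=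
        tendsto_one_div_add_atTop_nhds_zero_nat
      have h2 : Continuous (fun ε : ℝ => (1 - Real.exp (-(z * ε))) * w α z) := by continuity
      have h3 := (h2.tendsto 0).comp h1
      simpa [Function.comp_def] using h3
  simpa [Af] using key

lemma exists_neg {α L : ℝ} (hα : 2 < α) (hL : 1 ≤ L) :
    ∃ s, L < s ∧ s < L + 1 ∧ Iv α L s < 0 := by
  have hL0 : (0:ℝ) < L := by linarith
  have hC1 : (0:ℝ) < 1 + Gc α := by linarith [Gc_nonneg α]
  set c₀ := L * Real.exp (-1) / (1 + Gc α) with hc₀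
  have hc₀pos : 0 < c₀ := by rw [hc₀]; positivity
  have hev := (Af_tendsto hα).eventually_lt_const hc₀pos
  obtain ⟨n, hn1, hn2⟩ := ((eventually_ge_atTop 1).and hev).exists
  set s := L + 1 / ((n:ℝ) + 1) with hsdef
  have hn1' : (1:ℝ) ≤ (n:ℝ) := by exact_mod_cast hn1
  have hεpos : (0:ℝ) < 1 / ((n:ℝ) + 1) := by positivity
  have hεlt : (1:ℝ) / ((n:ℝ) + 1) < 1 := by
    rw [div_lt_one (by positivity)]; linarith
  have hs : L < s := by rw [hsdef]; linarith
  have hs1 : s < L + 1 := by rw [hsdef]; linarith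
  refine ⟨s, hs, hs1, ?_⟩
  have heq : Iv α L s = Af α (s - L) - Bf α L s := Iv_eq_sub hα hL0 hs hs1.le
  have hsL : s - L = 1 / ((n:ℝ) + 1) := by rw [hsdef]; ring
  rw [heq, hsL]
  have := Bf_ge hα hL hs hs1.le
  linarith


lemma integral_cmul {f : ℝ → ℝ} {s : Set ℝ} (c : ℝ) :
    ∫ z in s, c * f z = c * ∫ z in s, f z := by
  simpa [smul_eq_mul] using
    MeasureTheory.integral_smul (μ := volume.restrict s) c f

/-! ### Positive value for large s -/

lemma aux_exp_small {x : ℝ} (hx : 20 ≤ x) : (1 + x) * Real.exp (-(x / 2)) ≤ 1 / 2 := by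
  have h2 : (2:ℝ) ≤ Real.exp 1 := by have := Real.add_one_le_exp 1; linarith
  have hEp : (0:ℝ) < Real.exp (-(x / 4)) := Real.exp_pos _
  have he1 : Real.exp (-1) ≤ 1 / 2 := by
    rw [Real.exp_neg]
    rw [inv_le_comm₀ (Real.exp_pos 1) (by norm_num)]
    norm_num at h2 ⊢
    linarith
  have hxe : x * Real.exp (-(x / 4)) ≤ 2 := by
    have := xexp_le (x / 4)
    nlinarith
  have hq : Real.exp (-(x / 4)) ≤ Real.exp (-5) :=
    Real.exp_le_exp.2 (by linarith)
  have h5 : Real.exp (-5) ≤ 1 / 32 := by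
    have h32 : (32:ℝ) ≤ Real.exp 5 := by
      have : Real.exp ((5:ℕ) * (1:ℝ)) = Real.exp 1 ^ (5:ℕ) := Real.exp_nat_mul 1 5
      have h25 : (2:ℝ) ^ (5:ℕ) ≤ Real.exp 1 ^ (5:ℕ) :=
        pow_le_pow_left₀ (by norm_num) h2 5
      norm_num at this h25 ⊢
      linarith
    rw [Real.exp_neg]
    rw [inv_le_comm₀ (Real.exp_pos 5) (by norm_num)]
    linarith
  have hsplitE : Real.exp (-(x / 2)) = Real.exp (-(x / 4)) * Real.exp (-(x / 4)) := by
    rw [← Real.exp_add]; congr 1; ring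
  have hE2p : (0:ℝ) < Real.exp (-(x / 2)) := Real.exp_pos _
  calc (1 + x) * Real.exp (-(x / 2)) ≤ (2 * x) * Real.exp (-(x / 2)) :=
        mul_le_mul_of_nonneg_right (by linarith) hE2p.le
    _ = 2 * (x * Real.exp (-(x / 4))) * Real.exp (-(x / 4)) := by rw [hsplitE]; ring
    _ ≤ 2 * 2 * Real.exp (-(x / 4)) := by nlinarith
    _ ≤ 4 * Real.exp (-5) := by nlinarith
    _ ≤ 4 * (1 / 32) := by linarith
    _ ≤ 1 / 2 := by norm_num

lemma w_intOn_Ioi {α δ : ℝ} (hα : 2 < α) (hδ : 0 < δ) (hδ1 : δ ≤ 1) :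
    IntegrableOn (w α) (Ioi δ) := by
  apply Integrable.mono'
    (((integrable_minw hα).mono_set (Ioi_subset_Ioi hδ.le)).const_mul (1 / δ))
  · exact ((continuousOn_w hα).mono (Ioi_subset_Ioi hδ.le)).aestronglyMeasurable
      measurableSet_Ioi
  · filter_upwards [ae_restrict_mem measurableSet_Ioi] with z hz
    have hz' := mem_Ioi.1 hz
    have hz0 : 0 < z := lt_trans hδ hz'
    have hmin : δ ≤ min 1 z := le_min (by linarith) hz'.le
    have hw := w_pos (α := α) hz0
    rw [Real.norm_eq_abs, abs_of_nonneg hw.le]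
    calc w α z = w α z * 1 := (mul_one _).symm
      _ ≤ w α z * (min 1 z / δ) :=
          mul_le_mul_of_nonneg_left ((one_le_div hδ).2 hmin) hw.le
      _ = 1 / δ * (min 1 z * w α z) := by ring

lemma tail_lb {α δ : ℝ} (hα : 2 < α) (hδ : 0 < δ) (hδ1 : δ < 1) :
    1 / (1 + Gc α) * Real.log (1 / δ) ≤ ∫ z in Ioi δ, w α z := by
  have hC1 : (0:ℝ) < 1 + Gc α := by linarith [Gc_nonneg α]
  have hwint := w_intOn_Ioi hα hδ hδ1.le
  have stepA : ∫ z in Ioc δ 1, w α z ≤ ∫ z in Ioi δ, w α z := by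
    apply setIntegral_mono_set hwint ?_ (HasSubset.Subset.eventuallyLE Ioc_subset_Ioi_self)
    filter_upwards [ae_restrict_mem measurableSet_Ioi] with z hz
    exact (w_pos (lt_trans hδ (mem_Ioi.1 hz))).le
  have hcont : ContinuousOn (fun z : ℝ => 1 / (1 + Gc α) * (1 / z)) (Icc δ 1) := by
    apply continuousOn_const.mul
    apply continuousOn_const.div continuousOn_id
    intro x hx
    have h1 := hx.1
    intro h; simp only [id_eq] at h; rw [h] at h1; linarith
  have hoint : IntegrableOn (fun z : ℝ => 1 / (1 + Gc α) * (1 / z)) (Ioc δ 1) :=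
    (hcont.integrableOn_Icc).mono_set Ioc_subset_Icc_self
  have stepB : ∫ z in Ioc δ 1, (1 / (1 + Gc α) * (1 / z)) ≤ ∫ z in Ioc δ 1, w α z := by
    apply setIntegral_mono_on hoint (hwint.mono_set Ioc_subset_Ioi_self) measurableSet_Ioc
    intro z hz
    have hz0 : 0 < z := lt_trans hδ hz.1
    have hF := paperF_pos (α := α) hz0
    have hFle := paperF_le_C1 hα hz0 hz.2
    have h1 : (1:ℝ) / (1 + Gc α) * (1 / z) = 1 / (z * (1 + Gc α)) := by
      rw [div_mul_div_comm, one_mul, mul_comm]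
    rw [h1, w]
    apply one_div_le_one_div_of_le (by positivity)
    exact mul_le_mul_of_nonneg_left hFle hz0.le
  have stepC : ∫ z in Ioc δ 1, (1 / (1 + Gc α) * (1 / z))
      = 1 / (1 + Gc α) * Real.log (1 / δ) := by
    rw [integral_cmul]
    congr 1
    rw [← intervalIntegral.integral_of_le hδ1.le]
    have h0 : (0:ℝ) ∉ uIcc δ 1 := by
      rw [Set.uIcc_of_le hδ1.le]
      rintro ⟨h, -⟩; linarith
    rw [integral_one_div h0]

  linarith [stepA, stepB, stepC.symm.le, stepC.le]

set_option maxHeartbeats 1000000 in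
lemma exists_pos {α L : ℝ} (hα : 2 < α) (hL : 1 ≤ L) :
    ∃ s, L < s ∧ 0 < Iv α L s := by
  have hL0 : (0:ℝ) < L := by linarith
  have hGc := Gc_nonneg α
  have hC1 : (0:ℝ) < 1 + Gc α := by linarith
  set e1 := Real.exp 1 with he1def
  have he1pos : 0 < e1 := Real.exp_pos _
  set δ := Real.exp (-((1 + Gc α) * (4 * e1 + 2))) with hδdef
  have hδ0 : 0 < δ := Real.exp_pos _
  have hδ1 : δ < 1 := by
    have h := Real.exp_lt_exp.2 (show -((1 + Gc α) * (4 * e1 + 2)) < 0 by nlinarith)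
    rwa [Real.exp_zero] at h
  set s := max (2 * L + 2) (20 / δ) with hsdef
  have hs2L : 2 * L + 2 ≤ s := le_max_left _ _
  have hsδ : 20 / δ ≤ s := le_max_right _ _
  have hsL : L < s := by linarith
  have hs0 : (0:ℝ) < s := by linarith
  have hδs : 20 ≤ δ * s := by
    rw [mul_comm]
    calc (20:ℝ) = (20 / δ) * δ := by field_simp
      _ ≤ s * δ := mul_le_mul_of_nonneg_right hsδ hδ0.le
  -- tail bound
  have hlog : Real.log (1 / δ) = (1 + Gc α) * (4 * e1 + 2) := by
    rw [one_div, Real.log_inv, hδdef, Real.log_exp, neg_neg]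
  have htail : 4 * e1 + 2 ≤ ∫ z in Ioi δ, w α z := by
    have h2 := tail_lb hα hδ0 hδ1
    rw [hlog] at h2
    have heq : 1 / (1 + Gc α) * ((1 + Gc α) * (4 * e1 + 2)) = 4 * e1 + 2 := by
      field_simp
    rw [heq] at h2
    exact h2
  -- split
  have hint := igrand_intOn hα hL0 hsL
  have hint1 : IntegrableOn (igrand α L s) (Ioc 0 δ) := hint.mono_set Ioc_subset_Ioi_self
  have hint2 : IntegrableOn (igrand α L s) (Ioi δ) := hint.mono_set (Ioi_subset_Ioi hδ0.le)
  have hsplit : Iv α L s = (∫ z in Ioc (0:ℝ) δ, igrand α L s z)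
      + ∫ z in Ioi δ, igrand α L s z := by
    rw [Iv, ← setIntegral_union (Ioc_disjoint_Ioi le_rfl) measurableSet_Ioi hint1 hint2,
      Ioc_union_Ioi_eq_Ioi hδ0.le]
  -- part 2
  have h2a : ∫ z in Ioi δ, (1 / 2) * w α z ≤ ∫ z in Ioi δ, igrand α L s z := by
    apply setIntegral_mono_on ((w_intOn_Ioi hα hδ0 hδ1.le).const_mul (1 / 2)) hint2
      measurableSet_Ioi
    intro z hz
    have hz' := mem_Ioi.1 hz
    have hz0 : 0 < z := lt_trans hδ0 hz'
    have hw := w_pos (α := α) hz0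
    have hx20 : 20 ≤ z * s := by
      calc (20:ℝ) ≤ δ * s := hδs
        _ ≤ z * s := mul_le_mul_of_nonneg_right hz'.le hs0.le
    have hEle : Real.exp (-(z * (s - L))) ≤ Real.exp (-(z * s / 2)) := by
      apply Real.exp_le_exp.2
      nlinarith
    have hgz : 1 / 2 ≤ gz L s z := by
      rw [gz_eq]
      have hb : (1 + z * s) * Real.exp (-(z * (s - L)))
          ≤ (1 + z * s) * Real.exp (-(z * s / 2)) := by
        apply mul_le_mul_of_nonneg_left hEle (by nlinarith)
      have := aux_exp_small hx20
      have hform : (1 + z * s) * Real.exp (-(z * s / 2)) ≤ 1 / 2 := by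
        have : -(z * s / 2) = -(z * s / 2) := rfl
        calc (1 + z * s) * Real.exp (-(z * s / 2))
            = (1 + z * s) * Real.exp (-((z * s) / 2)) := by norm_num
          _ ≤ 1 / 2 := aux_exp_small hx20
      linarith
    rw [igrand]
    exact mul_le_mul_of_nonneg_right hgz hw.le
  have h2b : (∫ z in Ioi δ, (1 / 2) * w α z) = (1 / 2) * ∫ z in Ioi δ, w α z :=
    integral_cmul _
  have hpart2 : 2 * e1 + 1 ≤ ∫ z in Ioi δ, igrand α L s z := by
    rw [h2b] at h2a
    linarith
  -- part 1
  have hlo : ∀ z ∈ Ioc (0:ℝ) δ, -(e1 * s * Real.exp (-(s / 2) * z)) ≤ igrand α L s z := by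
    intro z hz
    have hz0 := hz.1
    have hzδ := hz.2
    have hz1 : z ≤ 1 := le_trans hzδ hδ1.le
    have hw := w_pos (α := α) hz0
    have hzw := zw_le_e (α := α) hz0 hz1
    have hE0 : (0:ℝ) < Real.exp (-(z * (s - L))) := Real.exp_pos _
    have hE1 : Real.exp (-(z * (s - L))) ≤ 1 := Real.exp_le_one_iff.2 (by nlinarith)
    have hEle : Real.exp (-(z * (s - L))) ≤ Real.exp (-(s / 2) * z) := by
      apply Real.exp_le_exp.2
      nlinarith
    have hg : -(z * s * Real.exp (-(z * (s - L)))) ≤ gz L s z := by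
      rw [gz]
      nlinarith
    have hup : z * s * Real.exp (-(z * (s - L))) * w α z
        ≤ e1 * s * Real.exp (-(s / 2) * z) := by
      have hzwE : z * s * Real.exp (-(z * (s - L))) * w α z
          = s * Real.exp (-(z * (s - L))) * (z * w α z) := by ring
      rw [hzwE]
      have hEp2 : (0:ℝ) < Real.exp (-(s / 2) * z) := Real.exp_pos _
      calc s * Real.exp (-(z * (s - L))) * (z * w α z)
          ≤ s * Real.exp (-(z * (s - L))) * e1 := by
            apply mul_le_mul_of_nonneg_left hzw (by positivity)
        _ ≤ s * Real.exp (-(s / 2) * z) * e1 := by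
            apply mul_le_mul_of_nonneg_right ?_ he1pos.le
            exact mul_le_mul_of_nonneg_left hEle hs0.le
        _ = e1 * s * Real.exp (-(s / 2) * z) := by ring
    rw [igrand]
    nlinarith [mul_le_mul_of_nonneg_right hg hw.le]
  have hloint : IntegrableOn (fun z : ℝ => -(e1 * s * Real.exp (-(s / 2) * z))) (Ioc 0 δ) := by
    exact (Continuous.integrableOn_Icc (by continuity)).mono_set Ioc_subset_Icc_self
  have h1a := setIntegral_mono_on hloint hint1 measurableSet_Ioc hlo
  have hval : (∫ z in Ioc (0:ℝ) δ, -(e1 * s * Real.exp (-(s / 2) * z)))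
      = 2 * e1 * (Real.exp (-(s / 2) * δ) - 1) := by
    have hre : (fun z : ℝ => -(e1 * s * Real.exp (-(s / 2) * z)))
        = fun z : ℝ => (-(e1 * s)) * Real.exp (-(s / 2) * z) := by
      funext z; ring
    rw [hre, integral_cmul]
    have hc : (-(s / 2)) ≠ 0 := by
      intro h; rw [neg_eq_zero] at h
      have : s = 0 := by linarith [h]
      linarith
    have hinner : (∫ z in Ioc (0:ℝ) δ, Real.exp (-(s / 2) * z))
        = (-(s / 2))⁻¹ * (Real.exp (-(s / 2) * δ) - 1) := by
      rw [← intervalIntegral.integral_of_le hδ0.le]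
      rw [intervalIntegral.integral_comp_mul_left Real.exp hc]
      rw [integral_exp, smul_eq_mul]
      norm_num
    rw [hinner]
    field_simp
  have hpart1 : -(2 * e1) ≤ ∫ z in Ioc (0:ℝ) δ, igrand α L s z := by
    rw [hval] at h1a
    have hqpos : (0:ℝ) < Real.exp (-(s / 2) * δ) := Real.exp_pos _
    nlinarith
  refine ⟨s, hsL, ?_⟩
  rw [hsplit]
  linarith

end OUL

/-- **Lemma 2, optimal user loading.** For `α > 2` and `L ≥ 1` there is a
unique `v ∈ (0, 1/L)` solving the first-order optimality condition
`∫₀^∞ (1 − e^{−z(1/v − L)} − (z/v) e^{−z(1/v − L)})/(z F(z,α)) dz = 0`. -/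
theorem optimal_user_loading_unique (α L : ℝ) (hα : 2 < α) (hL : 1 ≤ L) :
    ∃! v : ℝ, v ∈ Set.Ioo (0 : ℝ) (1 / L) ∧
      ∫ z in Set.Ioi (0 : ℝ),
        (1 - Real.exp (-(z * (1 / v - L))) - (z / v) * Real.exp (-(z * (1 / v - L))))
          / (z * paperF z α) = 0 := by
  have hL0 : (0:ℝ) < L := by linarith
  have hbridge : ∀ v : ℝ, (∫ z in Set.Ioi (0:ℝ),
      (1 - Real.exp (-(z * (1 / v - L))) - (z / v) * Real.exp (-(z * (1 / v - L))))
        / (z * paperF z α)) = OUL.Iv α L (1 / v) := by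
    intro v
    rw [OUL.Iv]
    congr 1
    funext z
    simp only [OUL.igrand, OUL.gz, OUL.w]
    ring
  obtain ⟨s₁, hs₁L, hs₁u, hs₁neg⟩ := OUL.exists_neg hα hL
  obtain ⟨s₂, hs₂L, hs₂pos⟩ := OUL.exists_pos hα hL
  have h12 : s₁ < s₂ := by
    by_contra h
    push_neg at h
    rcases eq_or_lt_of_le h with heq | hlt
    · rw [heq] at hs₂pos; linarith
    · have := OUL.Iv_strictMono hα hL0 hs₂L hlt
      linarith
  have hcont : ContinuousOn (OUL.Iv α L) (Set.Icc s₁ s₂) := by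
    intro x hx
    exact (OUL.Iv_continuousAt hα hL0 (lt_of_lt_of_le hs₁L hx.1)).continuousWithinAt
  obtain ⟨s, hsmem, hs0'⟩ := intermediate_value_Ioo h12.le hcont
    (Set.mem_Ioo.2 ⟨hs₁neg, hs₂pos⟩)
  have hsL : L < s := lt_trans hs₁L hsmem.1
  have hs0 : (0:ℝ) < s := by linarith
  refine ⟨1/s, ⟨⟨by positivity, ?_⟩, ?_⟩, ?_⟩
  · rw [div_lt_div_iff₀ hs0 hL0]
    linarith
  · rw [hbridge (1/s), one_div_one_div]
    exact hs0'
  · rintro v ⟨⟨hv0, hv1⟩, hveq⟩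
    have hvs : L < 1/v := by
      rw [lt_div_iff₀ hv0]
      have h2 := (lt_div_iff₀ hL0).1 hv1
      nlinarith
    rw [hbridge v] at hveq
    have heqs : 1/v = s := by
      rcases lt_trichotomy (1/v) s with h | h | h
      · have := OUL.Iv_strictMono hα hL0 hvs h
        rw [hveq, hs0'] at this; linarith
      · exact h
      · have := OUL.Iv_strictMono hα hL0 hsL h
        rw [hveq, hs0'] at this; linarith
    rw [← heqs, one_div_one_div]
end
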